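/- arXiv:1203.2902 — 6 statements merged into one kernel-verified Lean document; each statement's English description precedes it below -/
import Mathlib

section
/- Let K be a finitely generated abelian group and let χ₁, …, χ_m be elements of K. If the cone generated by χ₁⊗1, …, χ_m⊗1 in the rational vector space K_ℚ = K ⊗_ℤ ℚ (that is, the set of all nonnegative rational linear combinations of these elements) is a ℚ-linear subspace of K_ℚ (equivalently, is closed under negation), then the additive submonoid of K generated by χ₁, …, χ_m is a subgroup of K (i.e., it is closed under negation). -/
open scoped TensorProduct

private lemma aux_torsion (K : Type*) [AddCommGroup K] (y : K)
    (h : (1:ℚ) ⊗ₜ[ℤ] y = 0) : ∃ n : ℤ, 0 < n ∧ n • y = 0 := by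
  have hlm : IsLocalizedModule (nonZeroDivisors ℤ) (TensorProduct.mk ℤ ℚ K 1) :=
    (isLocalizedModule_iff_isBaseChange (nonZeroDivisors ℤ) ℚ _).mpr
      (TensorProduct.isBaseChange ℤ K ℚ)
  obtain ⟨s, hs⟩ :=
    (IsLocalizedModule.eq_zero_iff (nonZeroDivisors ℤ) (TensorProduct.mk ℤ ℚ K 1)).mp h
  have hs' : (s : ℤ) • y = 0 := hs
  have hs0 : (s : ℤ) ≠ 0 := nonZeroDivisors.coe_ne_zero s
  refine ⟨|(s : ℤ)|, abs_pos.mpr hs0, ?_⟩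
  rcases abs_choice (s : ℤ) with h' | h' <;> rw [h']
  · exact hs'
  · rw [neg_smul, hs', neg_zero]

private lemma aux_zsmul_mem {K : Type*} [AddCommGroup K] (S : AddSubmonoid K)
    {x : K} (hx : x ∈ S) {n : ℤ} (hn : 0 ≤ n) : n • x ∈ S := by
  lift n to ℕ using hn
  rw [natCast_zsmul]
  exact AddSubmonoid.nsmul_mem S hx n

/-- **Lemma (Lemel).** Let `K` be a finitely generated abelian group and
`χ₁, …, χ_m ∈ K`.  If the cone generated by the elements `χ_i ⊗ 1` in the
rational vector space `K_ℚ = ℚ ⊗_ℤ K` is closed under negation (equivalently,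
is a `ℚ`-linear subspace), then the additive submonoid of `K` generated by
`χ₁, …, χ_m` is closed under negation, i.e. is a subgroup of `K`. -/
theorem submonoid_is_group_of_cone_is_subspace
    (K : Type*) [AddCommGroup K] (hfg : AddGroup.FG K)
    (m : ℕ) (χ : Fin m → K)
    (cone : Set (ℚ ⊗[ℤ] K))
    (hcone : cone = {x : ℚ ⊗[ℤ] K | ∃ c : Fin m → ℚ,
      (∀ i, 0 ≤ c i) ∧ x = ∑ i, c i • ((1 : ℚ) ⊗ₜ[ℤ] χ i)})
    (hsub : ∀ x ∈ cone, -x ∈ cone) :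
    ∀ x ∈ AddSubmonoid.closure (Set.range χ),
      -x ∈ AddSubmonoid.closure (Set.range χ) := by
  set S := AddSubmonoid.closure (Set.range χ) with hS
  have key : ∀ i, -χ i ∈ S := by
    intro i
    have hmem : (1 : ℚ) ⊗ₜ[ℤ] χ i ∈ cone := by
      rw [hcone]
      refine ⟨Pi.single i 1, fun j => by by_cases h : j = i <;> simp [Pi.single_apply, h], ?_⟩
      rw [Finset.sum_eq_single i (fun j _ hj => by simp [Pi.single_apply, hj]) (by simp)]
      simp
    obtain ⟨c, hc0, hc⟩ := by rw [hcone] at *; exact hsub _ hmem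
    set N : ℕ := ∏ j, (c j).den with hNdef
    have hNpos : 0 < N := Finset.prod_pos (fun j _ => (c j).pos)
    have hek : ∀ j, ∃ e : ℤ, 0 ≤ e ∧ (e : ℚ) = (N : ℚ) * c j := by
      intro j
      obtain ⟨k, hk⟩ := Finset.dvd_prod_of_mem (fun j => (c j).den) (Finset.mem_univ j)
      refine ⟨(k : ℤ) * (c j).num,
        mul_nonneg (Int.natCast_nonneg k) (Rat.num_nonneg.mpr (hc0 j)), ?_⟩
      have hN' : (N : ℚ) = ((c j).den : ℚ) * (k : ℚ) := by
        rw [hNdef, hk]; push_cast; ring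
      rw [hN']
      push_cast
      rw [mul_comm ((c j).den : ℚ) (k : ℚ), mul_assoc, Rat.den_mul_eq_num]
    choose e he0 he using hek
    set y : K := (N : ℤ) • χ i + ∑ j, e j • χ j with hy
    have h0 : (1 : ℚ) ⊗ₜ[ℤ] y = 0 := by
      have h1 : (1 : ℚ) ⊗ₜ[ℤ] y
          = (N : ℚ) • ((1:ℚ) ⊗ₜ[ℤ] χ i) + ∑ j, ((N : ℚ) * c j) • ((1:ℚ) ⊗ₜ[ℤ] χ j) := by
        rw [hy, TensorProduct.tmul_add, TensorProduct.tmul_sum]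
        congr 1
        · rw [TensorProduct.tmul_smul, ← Int.cast_smul_eq_zsmul ℚ]
          norm_num
        · refine Finset.sum_congr rfl fun j _ => ?_
          rw [TensorProduct.tmul_smul, ← Int.cast_smul_eq_zsmul ℚ, he j]
      rw [h1]
      simp only [mul_smul]
      rw [← Finset.smul_sum, ← hc]
      simp
    obtain ⟨M, hMpos, hMy⟩ := aux_torsion K y h0
    have hcoeff : 0 ≤ M * (N : ℤ) - 1 := by
      have h2 : (0 : ℤ) < (N : ℤ) := by exact_mod_cast hNpos
      nlinarith
    have hfin : χ i + ((M * (N : ℤ) - 1) • χ i + ∑ j, (M * e j) • χ j) = 0 := by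
      have h3 : χ i + ((M * (N : ℤ) - 1) • χ i + ∑ j, (M * e j) • χ j) = M • y := by
        rw [hy, smul_add, Finset.smul_sum]
        simp only [smul_smul]
        rw [← add_assoc]
        congr 1
        nth_rewrite 1 [← one_zsmul (χ i)]
        rw [← add_smul]
        congr 1
        ring
      rw [h3, hMy]
    have h4 : -χ i = (M * (N : ℤ) - 1) • χ i + ∑ j, (M * e j) • χ j :=
      neg_eq_of_add_eq_zero_right hfin
    rw [h4]
    refine S.add_mem (aux_zsmul_mem S ?_ hcoeff) (AddSubmonoid.sum_mem S fun j _ =>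
      aux_zsmul_mem S ?_ (mul_nonneg hMpos.le (he0 j)))
    · exact AddSubmonoid.subset_closure ⟨i, rfl⟩
    · exact AddSubmonoid.subset_closure ⟨j, rfl⟩
  intro x hx
  induction hx using AddSubmonoid.closure_induction with
  | mem y hy => obtain ⟨i, rfl⟩ := hy; exact key i
  | zero => simpa using S.zero_mem
  | add a b _ _ ha hb => rw [neg_add]; exact S.add_mem ha hb
end

section
/- Let a₁, …, a_m ∈ ℤ^r be integer weight vectors and let the torus (ℂˣ)^r act diagonally on ℂ^m by t · z = (t^{a_1} z_1, …, t^{a_m} z_m), where t^{a_i} = ∏_{j=1}^r t_j^{a_{ij}}. If for some v ∈ ℂ^m the orbit {t · v : t ∈ (ℂˣ)^r} is a closed subset of ℂ^m (with its standard topology), then the additive submonoid of ℤ^r generated by the active weights {a_i : v_i ≠ 0} is a subgroup of ℤ^r (i.e., it is closed under negation). -/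
open Matrix Filter

private lemma dotProduct_finset_sum {r : ℕ} (y : Fin r → ℚ) {ι : Type*} (s : Finset ι)
    (f : ι → Fin r → ℚ) : y ⬝ᵥ (∑ i ∈ s, f i) = ∑ i ∈ s, y ⬝ᵥ f i := by
  classical
  induction s using Finset.cons_induction with
  | empty => simp
  | cons a s ha ih => rw [Finset.sum_cons, Finset.sum_cons, dotProduct_add, ih]

private lemma farkas {r : ℕ} :
    ∀ (n : ℕ) (A : Fin n → Fin r → ℚ) (b : Fin r → ℚ),
      (∃ μ : Fin n → ℚ, (∀ i, 0 ≤ μ i) ∧ b = ∑ i, μ i • A i) ∨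
      (∃ y : Fin r → ℚ, (∀ i, 0 ≤ y ⬝ᵥ A i) ∧ y ⬝ᵥ b < 0) := by
  intro n
  induction n with
  | zero =>
    intro A b
    by_cases hb : b = 0
    · exact Or.inl ⟨0, fun i => i.elim0, by simp [hb]⟩
    · refine Or.inr ⟨-b, fun i => i.elim0, ?_⟩
      have hpos : 0 < b ⬝ᵥ b := by
        have hnn : 0 ≤ b ⬝ᵥ b := Finset.sum_nonneg fun j _ => mul_self_nonneg (b j)
        have hne : b ⬝ᵥ b ≠ 0 := by
          intro h
          apply hb
          funext j
          have := (Finset.sum_eq_zero_iff_of_nonneg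
            (fun j _ => mul_self_nonneg (b j))).mp h j (Finset.mem_univ j)
          rw [Pi.zero_apply]
          exact mul_self_eq_zero.mp this
        exact lt_of_le_of_ne hnn (Ne.symm hne)
      simpa [neg_dotProduct] using neg_neg_of_pos hpos
  | succ n ih =>
    intro A b
    set a := A (Fin.last n) with ha_def
    set A₀ : Fin n → Fin r → ℚ := fun i => A i.castSucc with hA₀
    rcases ih A₀ b with ⟨μ, hμ, hb⟩ | ⟨y, hy, hyb⟩
    · refine Or.inl ⟨Fin.snoc μ 0, ?_, ?_⟩
      · intro i
        induction i using Fin.lastCases with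
        | last => simp
        | cast i => simpa using hμ i
      · rw [Fin.sum_univ_castSucc]
        simp [hb, hA₀]
    · by_cases hyA : 0 ≤ y ⬝ᵥ a
      · refine Or.inr ⟨y, fun i => ?_, hyb⟩
        induction i using Fin.lastCases with
        | last => exact hyA
        | cast i => exact hy i
      · push_neg at hyA
        have hα : y ⬝ᵥ a ≠ 0 := ne_of_lt hyA
        set A' : Fin n → Fin r → ℚ := fun i => A₀ i - (y ⬝ᵥ A₀ i / (y ⬝ᵥ a)) • a with hA'
        set b' : Fin r → ℚ := b - (y ⬝ᵥ b / (y ⬝ᵥ a)) • a with hb'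
        rcases ih A' b' with ⟨μ, hμ, hbeq⟩ | ⟨w, hw, hwb⟩
        · set γ : ℚ := y ⬝ᵥ b / (y ⬝ᵥ a) - ∑ i, μ i * (y ⬝ᵥ A₀ i / (y ⬝ᵥ a)) with hγ
          have hγ0 : 0 ≤ γ := by
            have h1 : 0 < y ⬝ᵥ b / (y ⬝ᵥ a) := div_pos_of_neg_of_neg hyb hyA
            have h2 : ∑ i, μ i * (y ⬝ᵥ A₀ i / (y ⬝ᵥ a)) ≤ 0 := by
              refine Finset.sum_nonpos fun i _ => ?_
              have : y ⬝ᵥ A₀ i / (y ⬝ᵥ a) ≤ 0 := div_nonpos_of_nonneg_of_nonpos (hy i) hyA.le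
              exact mul_nonpos_of_nonneg_of_nonpos (hμ i) this
            have h3 : 0 ≤ y ⬝ᵥ b / (y ⬝ᵥ a) - ∑ i, μ i * (y ⬝ᵥ A₀ i / (y ⬝ᵥ a)) :=
              sub_nonneg.mpr (h2.trans h1.le)
            rwa [← hγ] at h3
          refine Or.inl ⟨Fin.snoc μ γ, ?_, ?_⟩
          · intro i
            induction i using Fin.lastCases with
            | last => simpa using hγ0
            | cast i => simpa using hμ i
          · rw [Fin.sum_univ_castSucc]
            simp only [Fin.snoc_castSucc, Fin.snoc_last]
            have hexp : b = ∑ i, μ i • A' i + (y ⬝ᵥ b / (y ⬝ᵥ a)) • a := by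
              rw [← hbeq, hb']; abel
            rw [hexp]
            have : ∑ i, μ i • A' i
                = ∑ i, μ i • A₀ i - (∑ i, μ i * (y ⬝ᵥ A₀ i / (y ⬝ᵥ a))) • a := by
              rw [Finset.sum_smul, ← Finset.sum_sub_distrib]
              refine Finset.sum_congr rfl fun i _ => ?_
              rw [hA']
              simp [smul_sub, smul_smul]
            rw [this, hγ, sub_smul]
            abel
        · refine Or.inr ⟨w - (w ⬝ᵥ a / (y ⬝ᵥ a)) • y, fun i => ?_, ?_⟩
          · induction i using Fin.lastCases with
            | last =>
              have : (w - (w ⬝ᵥ a / (y ⬝ᵥ a)) • y) ⬝ᵥ a = 0 := by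
                rw [sub_dotProduct, smul_dotProduct, smul_eq_mul,
                  div_mul_cancel₀ _ hα, sub_self]
              rw [ha_def] at this
              rw [this]
            | cast i =>
              have heq : (w - (w ⬝ᵥ a / (y ⬝ᵥ a)) • y) ⬝ᵥ A₀ i = w ⬝ᵥ A' i := by
                rw [hA', sub_dotProduct, smul_dotProduct,
                  dotProduct_sub, dotProduct_smul]
                simp only [smul_eq_mul]
                field_simp
              have : (w - (w ⬝ᵥ a / (y ⬝ᵥ a)) • y) ⬝ᵥ A i.castSucc = w ⬝ᵥ A' i := heq
              rw [this]
              exact hw i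
          · have heq : (w - (w ⬝ᵥ a / (y ⬝ᵥ a)) • y) ⬝ᵥ b = w ⬝ᵥ b' := by
              rw [hb', sub_dotProduct, smul_dotProduct,
                dotProduct_sub, dotProduct_smul]
              simp only [smul_eq_mul]
              field_simp
            rw [heq]
            exact hwb

private lemma den_mul_self (q : ℚ) : q * (q.den : ℚ) = (q.num : ℚ) :=
  (eq_div_iff (by exact_mod_cast q.den_ne_zero)).mp (Rat.num_div_den q).symm

private lemma int_of_den_dvd (q : ℚ) {N : ℕ} (h : q.den ∣ N) : ∃ c : ℤ, (c : ℚ) = N * q := by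
  obtain ⟨t, ht⟩ := h
  refine ⟨t * q.num, ?_⟩
  push_cast
  rw [ht]
  push_cast
  rw [mul_comm ((q.den : ℚ)) (t : ℚ), mul_assoc, mul_comm ((q.den : ℚ)) q, den_mul_self]

private lemma nat_of_den_dvd {q : ℚ} (hq : 0 ≤ q) {N : ℕ} (h : q.den ∣ N) :
    ∃ c : ℕ, (c : ℚ) = N * q := by
  obtain ⟨c, hc⟩ := int_of_den_dvd q h
  have hc0 : 0 ≤ c := by
    have : (0 : ℚ) ≤ (c : ℚ) := by rw [hc]; positivity
    exact_mod_cast this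
  refine ⟨c.toNat, ?_⟩
  rw [← hc]
  have : ((c.toNat : ℤ) : ℚ) = (c : ℚ) := by exact_mod_cast congrArg (fun z : ℤ => (z : ℚ)) (Int.toNat_of_nonneg hc0)
  exact_mod_cast this

private lemma units_zpow_sum (u : ℂˣ) {ι : Type*} (s : Finset ι) (f : ι → ℤ) :
    u ^ (∑ i ∈ s, f i) = ∏ i ∈ s, u ^ f i := by
  induction s using Finset.cons_induction with
  | empty => simp
  | cons a s ha ih => rw [Finset.sum_cons, Finset.prod_cons, _root_.zpow_add, ih]



private lemma units_zpow_sumX (u : ℂˣ) {ι : Type*} (s : Finset ι) (f : ι → ℤ) :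
    u ^ (∑ i ∈ s, f i) = ∏ i ∈ s, u ^ f i := by
  induction s using Finset.cons_induction with
  | empty => simp
  | cons a s ha ih => rw [Finset.sum_cons, Finset.prod_cons, _root_.zpow_add, ih]

private lemma key_lemma (r m : ℕ) (a : Fin m → Fin r → ℤ) (v : Fin m → ℂ)
    (orbit : Set (Fin m → ℂ))
    (horbit : orbit = {z : Fin m → ℂ | ∃ t : Fin r → ℂˣ,
      z = fun i => ((∏ j, t j ^ a i j : ℂˣ) : ℂ) * v i})
    (hclosed : IsClosed orbit)
    (lam : Fin r → ℤ) (hlam : ∀ i, v i ≠ 0 → 0 ≤ ∑ j, lam j * a i j) :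
    ∀ k, v k ≠ 0 → (∑ j, lam j * a k j) = 0 := by
  intro k hk
  by_contra hne
  have hpos : 0 < ∑ j, lam j * a k j := lt_of_le_of_ne (hlam k hk) (Ne.symm hne)
  set u : ℂˣ := Units.mk0 (2⁻¹ : ℂ) (by norm_num) with hu
  set d : Fin m → ℤ := fun i => ∑ j, lam j * a i j with hd
  set p : ℕ → (Fin m → ℂ) := fun n i => ((u ^ ((n : ℤ) * d i) : ℂˣ) : ℂ) * v i with hp
  have hmem : ∀ n, p n ∈ orbit := by
    intro n
    rw [horbit]
    refine ⟨fun j => u ^ ((n : ℤ) * lam j), ?_⟩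
    funext i
    have h1 : (∏ j, (u ^ ((n : ℤ) * lam j)) ^ a i j) = u ^ ((n : ℤ) * d i) := by
      have h2 : ((n : ℤ) * d i) = ∑ j, ((n : ℤ) * lam j) * a i j := by
        rw [hd, Finset.mul_sum]
        exact Finset.sum_congr rfl fun j _ => (mul_assoc _ _ _).symm
      rw [h2, units_zpow_sumX]
      exact Finset.prod_congr rfl fun j _ => (_root_.zpow_mul u _ _).symm
    rw [hp]
    simp only [h1]
  set z : Fin m → ℂ := fun i => if d i = 0 then v i else 0 with hz
  have htend : Tendsto p atTop (nhds z) := by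
    rw [tendsto_pi_nhds]
    intro i
    by_cases hvi : v i = 0
    · have hpn : ∀ n, p n i = z i := by
        intro n; rw [hp, hz]; simp [hvi]
      simp only [hpn]
      exact tendsto_const_nhds
    · by_cases hdi : d i = 0
      · have hpn : ∀ n, p n i = z i := by
          intro n; rw [hp, hz]; simp [hdi]
        simp only [hpn]
        exact tendsto_const_nhds
      · have hdi' : 0 < d i := lt_of_le_of_ne (hlam i hvi) (Ne.symm hdi)
        have hval : ((u ^ d i : ℂˣ) : ℂ) = (2⁻¹ : ℂ) ^ (d i).toNat := by
          rw [← Int.toNat_of_nonneg hdi'.le, zpow_natCast]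
          push_cast [hu]
          rfl
        have hnorm : ‖((u ^ d i : ℂˣ) : ℂ)‖ < 1 := by
          rw [hval, norm_pow]
          have h2 : ‖(2⁻¹ : ℂ)‖ = 2⁻¹ := by
            rw [norm_inv]
            norm_num
          rw [h2]
          have htn : (d i).toNat ≠ 0 := by
            simp [Int.toNat_eq_zero]
            omega
          exact pow_lt_one₀ (by norm_num) (by norm_num) htn
        have heq : ∀ n : ℕ, p n i = ((u ^ d i : ℂˣ) : ℂ) ^ n * v i := by
          intro n
          rw [hp]
          have : u ^ ((n : ℤ) * d i) = (u ^ d i) ^ n := by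
            rw [mul_comm, _root_.zpow_mul, zpow_natCast]
          simp only [this, Units.val_pow_eq_pow_val]
        have hzi : z i = 0 := by rw [hz]; simp [hdi]
        rw [hzi]
        simp only [heq]
        simpa using (tendsto_pow_atTop_nhds_zero_of_norm_lt_one hnorm).mul_const (v i)
  have hzmem : z ∈ orbit := hclosed.mem_of_tendsto htend (Eventually.of_forall hmem)
  rw [horbit] at hzmem
  obtain ⟨t, ht⟩ := hzmem
  have hzk := congrFun ht k
  rw [hz] at hzk
  simp only at hzk
  rw [if_neg (by rw [hd]; exact hne)] at hzk
  have : ((∏ j, t j ^ a k j : ℂˣ) : ℂ) * v k ≠ 0 :=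
    mul_ne_zero (Units.ne_zero _) hk
  exact this hzk.symm

/-- If the orbit of `v ∈ ℂ^m` under the diagonal linear action of `(ℂˣ)^r`
with integer weight vectors `a₁, …, a_m ∈ ℤ^r` is closed, then the additive
submonoid of `ℤ^r` generated by the active weights (those `a_i` with
`v_i ≠ 0`) is closed under negation, i.e. is a subgroup of `ℤ^r`. -/
theorem active_weights_semigroup_is_group_of_orbit_closed
    (r m : ℕ) (a : Fin m → Fin r → ℤ) (v : Fin m → ℂ)
    (orbit : Set (Fin m → ℂ))
    (horbit : orbit = {z : Fin m → ℂ | ∃ t : Fin r → ℂˣ,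
      z = fun i => ((∏ j, t j ^ a i j : ℂˣ) : ℂ) * v i})
    (hclosed : IsClosed orbit) :
    ∀ x ∈ AddSubmonoid.closure {w : Fin r → ℤ | ∃ i, v i ≠ 0 ∧ w = a i},
      -x ∈ AddSubmonoid.closure {w : Fin r → ℤ | ∃ i, v i ≠ 0 ∧ w = a i} := by
  classical
  set S : Set (Fin r → ℤ) := {w : Fin r → ℤ | ∃ i, v i ≠ 0 ∧ w = a i} with hS
  have key := key_lemma r m a v orbit horbit hclosed
  have hgen : ∀ k, v k ≠ 0 → -(a k) ∈ AddSubmonoid.closure S := by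
    intro k hk
    set A : Fin m → Fin r → ℚ := fun i => if v i = 0 then 0 else fun j => (a i j : ℚ) with hA
    set b : Fin r → ℚ := fun j => -(a k j : ℚ) with hb
    rcases farkas m A b with ⟨μ, hμ, hbeq⟩ | ⟨y, hy, hyb⟩
    · -- cone case: clear denominators
      set N : ℕ := ∏ i, (μ i).den with hN
      have hNpos : 0 < N := Finset.prod_pos fun i _ => (μ i).pos
      have hc : ∀ i, ∃ c : ℕ, (c : ℚ) = N * μ i := fun i =>
        nat_of_den_dvd (hμ i) (Finset.dvd_prod_of_mem _ (Finset.mem_univ i))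
      choose c hc using hc
      set g : Fin m → (Fin r → ℤ) := fun i => if v i = 0 then 0 else c i • a i with hg
      have hw : (N : ℤ) • (-(a k)) = ∑ i, g i := by
        funext j
        apply @Int.cast_injective ℚ _
        have hq := congrFun hbeq j
        rw [Finset.sum_apply] at hq
        have hq2 : (N : ℚ) * b j = ∑ i, (c i : ℚ) * (if v i = 0 then 0 else (a i j : ℚ)) := by
          rw [hq, Finset.mul_sum]
          refine Finset.sum_congr rfl fun i _ => ?_
          have hterm : (μ i • A i) j = μ i * (if v i = 0 then 0 else (a i j : ℚ)) := by
            rw [Pi.smul_apply, smul_eq_mul, hA]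
            by_cases hvi : v i = 0 <;> simp [hvi]
          rw [hterm, ← mul_assoc, ← hc i]
        have hlhs : (((N : ℤ) • (-(a k))) j : ℤ) = -((N : ℤ) * a k j) := by
          simp [Pi.smul_apply, smul_eq_mul, mul_neg]
        have hrhs : ((∑ i, g i) j : ℤ) = ∑ i, (if v i = 0 then 0 else (c i : ℤ) * a i j) := by
          rw [Finset.sum_apply]
          refine Finset.sum_congr rfl fun i _ => ?_
          simp only [hg]
          by_cases hvi : v i = 0 <;> simp [hvi]
        rw [hlhs, hrhs]
        push_cast
        have hbj : b j = -(a k j : ℚ) := rfl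
        rw [hbj] at hq2
        calc (-((N : ℚ) * (a k j : ℚ))) = (N : ℚ) * (-(a k j : ℚ)) := by ring
          _ = ∑ i, (c i : ℚ) * (if v i = 0 then 0 else (a i j : ℚ)) := hq2
          _ = ∑ i, (if v i = 0 then 0 else (c i : ℚ) * (a i j : ℚ)) := by
              refine Finset.sum_congr rfl fun i _ => ?_
              by_cases hvi : v i = 0 <;> simp [hvi]
      have hsum_mem : (∑ i, g i) ∈ AddSubmonoid.closure S := by
        refine AddSubmonoid.sum_mem _ fun i _ => ?_
        simp only [hg]
        by_cases hvi : v i = 0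
        · rw [if_pos hvi]
          exact AddSubmonoid.zero_mem _
        · rw [if_neg hvi]
          have hmemS : a i ∈ S := by rw [hS]; exact ⟨i, hvi, rfl⟩
          exact AddSubmonoid.nsmul_mem _ (AddSubmonoid.subset_closure hmemS) (c i)
      have hfin : -(a k) = (N : ℤ) • (-(a k)) + (N - 1 : ℕ) • (a k) := by
        have hsm : ((N - 1 : ℕ)) • (a k) = ((N : ℤ) - 1) • (a k) := by
          rw [← natCast_zsmul]
          congr 1
          push_cast [Nat.cast_sub hNpos]
          ring
        rw [hsm, smul_neg, sub_smul, one_smul]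
        abel
      have hmemS : a k ∈ S := by rw [hS]; exact ⟨k, hk, rfl⟩
      rw [hfin, hw]
      exact AddSubmonoid.add_mem _ hsum_mem
        (AddSubmonoid.nsmul_mem _ (AddSubmonoid.subset_closure hmemS) _)
    · -- dual case: contradiction with key lemma
      exfalso
      set D : ℕ := ∏ j, (y j).den with hD
      have hDpos : 0 < D := Finset.prod_pos fun j _ => (y j).pos
      have hl : ∀ j, ∃ c : ℤ, (c : ℚ) = D * y j := fun j =>
        int_of_den_dvd (y j) (Finset.dvd_prod_of_mem _ (Finset.mem_univ j))
      choose lam hlam using hl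
      have hcast : ∀ i, ((∑ j, lam j * a i j : ℤ) : ℚ) = D * ∑ j, y j * (a i j : ℚ) := by
        intro i
        push_cast
        rw [Finset.mul_sum]
        refine Finset.sum_congr rfl fun j _ => ?_
        rw [hlam j, mul_assoc]
      have h1 : ∀ i, v i ≠ 0 → 0 ≤ ∑ j, lam j * a i j := by
        intro i hvi
        have hAi : y ⬝ᵥ A i = ∑ j, y j * (a i j : ℚ) := by
          simp only [hA]
          simp [dotProduct, if_neg hvi]
        have h0 := hy i
        rw [hAi] at h0
        have h5 : (0 : ℚ) ≤ ((∑ j, lam j * a i j : ℤ) : ℚ) := by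
          rw [hcast i]
          exact mul_nonneg (by positivity) h0
        exact_mod_cast h5
      have h2 := key lam h1 k hk
      have h3 : 0 < ∑ j, y j * (a k j : ℚ) := by
        have hbv : y ⬝ᵥ b = -∑ j, y j * (a k j : ℚ) := by
          rw [hb]
          simp [dotProduct, mul_neg, Finset.sum_neg_distrib]
        rw [hbv] at hyb
        linarith
      have h4 : (0 : ℚ) < ((∑ j, lam j * a k j : ℤ) : ℚ) := by
        rw [hcast k]
        exact mul_pos (by exact_mod_cast hDpos) h3
      rw [h2] at h4
      norm_num at h4
  intro x hx
  exact AddSubmonoid.closure_induction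
    (fun w hw => by obtain ⟨i, hvi, rfl⟩ := hw; exact hgen i hvi)
    (by simpa using AddSubmonoid.zero_mem (AddSubmonoid.closure S))
    (fun x y hx hy px py => by rw [neg_add_rev]; exact AddSubmonoid.add_mem _ py px) hx
end

section
/- Let v₀, v₁, …, v_m ∈ ℤ^n (m ≥ 0, n ≥ 1). Assume: (i) v₀ is primitive; (ii) the cone C ⊆ ℚ^n generated by v₀, v₁, …, v_m is pointed, i.e., C ∩ (−C) = {0}; (iii) v₀ does not lie in the cone generated by v₁, …, v_m. Then there exists a group homomorphism e : ℤ^n → ℤ such that e(v₀) = −1 and e(v_i) ≥ 0 for all i = 1, …, m. (In other words, every extremal ray of a pointed rational polyhedral cone admits a Demazure root.) -/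
/-- Bezout over a finset in ℤ. -/
lemma my_bezout {ι : Type*} [DecidableEq ι] (s : Finset ι) (f : ι → ℤ) :
    ∃ c : ι → ℤ, ∑ i ∈ s, c i * f i = s.gcd f := by
  classical
  induction s using Finset.induction_on with
  | empty => exact ⟨0, by simp⟩
  | @insert a s ha ih =>
    obtain ⟨c, hc⟩ := ih
    obtain ⟨A, B, hAB⟩ := exists_gcd_eq_mul_add_mul (f a) (s.gcd f)
    refine ⟨fun i => if i = a then A else c i * B, ?_⟩
    rw [Finset.sum_insert ha, Finset.gcd_insert]
    have h2 : ∑ i ∈ s, (if i = a then A else c i * B) * f i = (∑ i ∈ s, c i * f i) * B := by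
      rw [Finset.sum_mul]
      refine Finset.sum_congr rfl fun i hi => ?_
      have : i ≠ a := fun h => ha (h ▸ hi)
      simp [this]; ring
    rw [h2, hc]
    simpa [mul_comm] using hAB.symm

/-- A rational linear system with a real solution has a rational solution. -/
lemma my_rat_solution {ι κ : Type*} [Fintype ι] [Fintype κ] (M : κ → ι → ℚ) (b : κ → ℚ)
    (h : ∃ x : ι → ℝ, ∀ r, ∑ i, (M r i : ℝ) * x i = (b r : ℝ)) :
    ∃ y : ι → ℚ, ∀ r, ∑ i, M r i * y i = b r := by
  classical
  by_contra hno
  push_neg at hno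
  -- b is not in the range of the linear map y ↦ M y
  set L : (ι → ℚ) →ₗ[ℚ] (κ → ℚ) :=
    { toFun := fun y => fun r => ∑ i, M r i * y i
      map_add' := by intro y z; funext r; simp [mul_add, Finset.sum_add_distrib]
      map_smul' := by
        intro a y; funext r
        simp only [RingHom.id_apply, Pi.smul_apply, smul_eq_mul, Finset.mul_sum]
        exact Finset.sum_congr rfl fun i _ => by ring }
  have hbr : b ∉ LinearMap.range L := by
    rintro ⟨y, hy⟩
    obtain ⟨r, hr⟩ := hno y
    exact hr (by rw [← hy]; rfl)
  -- get a rational functional vanishing on range L and nonzero on b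
  set W := LinearMap.range L
  have hq0 : Submodule.Quotient.mk (p := W) b ≠ 0 := by
    simpa [Submodule.Quotient.mk_eq_zero] using hbr
  obtain ⟨φ, hφ⟩ : ∃ φ : Module.Dual ℚ ((κ → ℚ) ⧸ W), φ (Submodule.Quotient.mk b) ≠ 0 := by
    by_contra hall
    push_neg at hall
    exact hq0 ((Module.forall_dual_apply_eq_zero_iff ℚ _).mp hall)
  set ψ : Module.Dual ℚ (κ → ℚ) := φ.comp W.mkQ
  have hψrange : ∀ y : ι → ℚ, ψ (L y) = 0 := by
    intro y
    have : W.mkQ (L y) = 0 := by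
      simp [Submodule.mkQ_apply, Submodule.Quotient.mk_eq_zero]
      exact ⟨y, rfl⟩
    simp [ψ, LinearMap.comp_apply, this]
  have hψb : ψ b ≠ 0 := hφ
  -- represent ψ by a vector ρ
  set ρ : κ → ℚ := fun r => ψ (Pi.single r (1:ℚ))
  have hrep : ∀ z : κ → ℚ, ψ z = ∑ r, z r * ρ r := by
    intro z
    conv_lhs => rw [← Finset.univ_sum_single z]
    rw [map_sum]
    refine Finset.sum_congr rfl fun r _ => ?_
    have : (Pi.single r (z r) : κ → ℚ) = z r • (Pi.single r (1 : ℚ) : κ → ℚ) := by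
      rw [← Pi.single_smul]; simp
    rw [this, map_smul, smul_eq_mul]
  -- ψ kills every column
  have hcol : ∀ i, ∑ r, M r i * ρ r = 0 := by
    intro i
    have h1 : L (Pi.single i (1:ℚ)) = fun r => M r i := by
      funext r
      show ∑ i', M r i' * (Pi.single i (1:ℚ) : ι → ℚ) i' = M r i
      rw [Finset.sum_eq_single i]
      · simp
      · intro i' _ hne; simp [Pi.single_eq_of_ne hne]
      · simp
    have := hψrange (Pi.single i (1:ℚ))
    rw [h1, hrep] at this
    exact this
  obtain ⟨x, hx⟩ := h
  -- contradiction by casting to ℝ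
  have hzero : ((ψ b : ℚ) : ℝ) = 0 := by
    rw [hrep]
    push_cast
    have : ∀ r, ((b r : ℝ)) * (ρ r : ℝ) = (∑ i, (M r i : ℝ) * x i) * (ρ r : ℝ) := by
      intro r; rw [hx r]
    calc ∑ r, (b r : ℝ) * (ρ r : ℝ) = ∑ r, (∑ i, (M r i : ℝ) * x i) * (ρ r : ℝ) :=
          Finset.sum_congr rfl fun r _ => this r
      _ = ∑ r, ∑ i, x i * ((M r i : ℝ) * (ρ r : ℝ)) := by
          refine Finset.sum_congr rfl fun r _ => ?_
          rw [Finset.sum_mul]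
          exact Finset.sum_congr rfl fun i _ => by ring
      _ = ∑ i, ∑ r, x i * ((M r i : ℝ) * (ρ r : ℝ)) := Finset.sum_comm
      _ = ∑ i, x i * ∑ r, (M r i : ℝ) * (ρ r : ℝ) := by
          exact Finset.sum_congr rfl fun i _ => (Finset.mul_sum _ _ _).symm
      _ = 0 := by
          refine Finset.sum_eq_zero fun i _ => ?_
          have : ((∑ r, M r i * ρ r : ℚ) : ℝ) = 0 := by rw [hcol i]; simp
          push_cast at this
          rw [this, mul_zero]
  exact hψb (by exact_mod_cast hzero)


/-- Rational strict separation of `0` from a finite set of rational vectors which admits no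
rational convex combination equal to `0`. -/
lemma my_sep {n : ℕ} (S : Finset (Fin n → ℚ))
    (hyp : ∀ (ι : Type) [Fintype ι] (G : ι → (Fin n → ℚ)), (∀ i, G i ∈ S) →
      ∀ y : ι → ℚ, (∀ i, 0 ≤ y i) → ∑ i, y i = 1 → ∑ i, y i • G i ≠ 0) :
    ∃ q : Fin n → ℚ, ∀ x ∈ S, 0 < ∑ j, q j * x j := by
  classical
  set F : (Fin n → ℚ) → (Fin n → ℝ) := fun x j => (x j : ℝ) with hF
  -- step 1 : 0 is not in the real convex hull
  have h0 : (0 : Fin n → ℝ) ∉ convexHull ℝ (F '' (S : Set (Fin n → ℚ))) := by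
    intro h0
    obtain ⟨ι, hfin, z, wgt, hrange, hai, hpos, hsum1, hcomb⟩ :=
      eq_pos_convex_span_of_mem_convexHull h0
    have hmem : ∀ i : ι, z i ∈ F '' (S : Set (Fin n → ℚ)) := fun i => hrange ⟨i, rfl⟩
    choose G hGS hFG using fun i => hmem i
    set M : (Fin n ⊕ Unit) → ι → ℚ := fun r i =>
      match r with | .inl j => G i j | .inr _ => 1 with hM
    set b : (Fin n ⊕ Unit) → ℚ := fun r =>
      match r with | .inl _ => 0 | .inr _ => 1 with hb
    have hreal : ∃ x : ι → ℝ, ∀ r, ∑ i, (M r i : ℝ) * x i = (b r : ℝ) := by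
      refine ⟨wgt, ?_⟩
      rintro (j | u)
      · have hz : ∀ i, ((G i j : ℚ) : ℝ) = z i j := fun i => congrFun (hFG i) j
        have h1 := congrFun hcomb j
        simp only [Finset.sum_apply, Pi.smul_apply, smul_eq_mul, Pi.zero_apply] at h1
        show ∑ i, ((G i j : ℚ) : ℝ) * wgt i = ((0:ℚ):ℝ)
        rw [Rat.cast_zero, ← h1]
        exact Finset.sum_congr rfl fun i _ => by rw [hz i]; ring
      · show ∑ i, ((1:ℚ):ℝ) * wgt i = ((1:ℚ):ℝ)
        push_cast
        simpa using hsum1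
    obtain ⟨y, hy⟩ := my_rat_solution M b hreal
    have hrow0 : ∀ j, ∑ i, G i j * y i = 0 := by
      intro j
      have h := hy (Sum.inl j)
      simp only [hM, hb] at h
      simpa using h
    have hysum : ∑ i, y i = 1 := by
      have h := hy (Sum.inr ())
      simp only [hM, hb] at h
      simpa using h
    have hcomb2 : ∑ i, ((y i : ℝ)) • z i = (0 : Fin n → ℝ) := by
      funext j
      simp only [Finset.sum_apply, Pi.smul_apply, smul_eq_mul, Pi.zero_apply]
      have hz : ∀ i, ((G i j : ℚ) : ℝ) = z i j := fun i => congrFun (hFG i) j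
      have : ((∑ i, G i j * y i : ℚ) : ℝ) = 0 := by rw [hrow0 j]; simp
      push_cast at this
      rw [← this]
      exact Finset.sum_congr rfl fun i _ => by rw [← hz i]; ring
    have hysumR : ∑ i, ((y i : ℝ)) = 1 := by
      have : ((∑ i, y i : ℚ) : ℝ) = 1 := by rw [hysum]; simp
      push_cast at this; exact this
    have heq : wgt = fun i => (y i : ℝ) := by
      have h := (affineIndependent_iff_indicator_eq_of_affineCombination_eq (k := ℝ) z).mp hai
        Finset.univ Finset.univ wgt (fun i => (y i : ℝ)) hsum1 hysumR ?_
      · have h' := h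
        rw [Finset.coe_univ, Set.indicator_univ, Set.indicator_univ] at h'
        exact h'
      · rw [Finset.univ.affineCombination_eq_linear_combination z wgt hsum1,
          Finset.univ.affineCombination_eq_linear_combination z _ hysumR, hcomb, hcomb2]
    have hynn : ∀ i, 0 ≤ y i := by
      intro i
      have h3 : (0:ℝ) < ((y i : ℚ) : ℝ) := by have := hpos i; rwa [heq] at this
      exact_mod_cast h3.le
    refine hyp ι G hGS y hynn hysum ?_
    funext j
    simp only [Finset.sum_apply, Pi.smul_apply, smul_eq_mul, Pi.zero_apply]
    rw [← hrow0 j]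
    exact Finset.sum_congr rfl fun i _ => by ring
  -- step 2 : real separation
  have hfinim : (F '' (S : Set (Fin n → ℚ))).Finite := (S.finite_toSet).image F
  obtain ⟨f, u, hfu, hub⟩ := geometric_hahn_banach_point_closed
    (convex_convexHull ℝ _) (hfinim.isCompact_convexHull ℝ).isClosed h0
  have hu0 : (0:ℝ) < u := by simpa using hfu
  have hxu : ∀ x ∈ S, u < ∑ j, (x j : ℝ) * f (Pi.single j 1) := by
    intro x hx
    have hmem : F x ∈ convexHull ℝ (F '' (S : Set (Fin n → ℚ))) :=
      subset_convexHull ℝ _ ⟨x, hx, rfl⟩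
    have := hub _ hmem
    have hdec : f (F x) = ∑ j, (x j : ℝ) * f (Pi.single j 1) := by
      conv_lhs => rw [show F x = ∑ j, Pi.single j (F x j) from (Finset.univ_sum_single (F x)).symm]
      rw [map_sum]
      refine Finset.sum_congr rfl fun j _ => ?_
      have : (Pi.single j (F x j) : Fin n → ℝ) = F x j • (Pi.single j (1:ℝ) : Fin n → ℝ) := by
        rw [← Pi.single_smul]; simp
      rw [this, map_smul, smul_eq_mul]
    rw [← hdec]; exact this
  -- step 3 : rational approximation
  set M₀ : ℚ := 1 + ∑ x ∈ S, ∑ j, |x j| with hM₀def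
  have hM₀pos : 0 < M₀ := by positivity
  have hM₀posR : (0:ℝ) < (M₀ : ℝ) := by exact_mod_cast hM₀pos
  have hδpos : 0 < u / (M₀ : ℝ) := div_pos hu0 hM₀posR
  choose q hq using fun j => exists_rat_near (f (Pi.single j (1:ℝ))) hδpos
  refine ⟨q, ?_⟩
  intro x hx
  have hbound : (∑ j, |x j| : ℚ) ≤ M₀ - 1 := by
    rw [hM₀def, add_sub_cancel_left]
    exact Finset.single_le_sum (f := fun x : Fin n → ℚ => ∑ j, |x j|)
      (fun y _ => Finset.sum_nonneg fun j _ => abs_nonneg _) hx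
  have hdiff : |∑ j, (x j : ℝ) * f (Pi.single j 1) - ∑ j, (x j : ℝ) * (q j : ℝ)| < u := by
    rw [← Finset.sum_sub_distrib]
    calc |∑ j, ((x j : ℝ) * f (Pi.single j 1) - (x j : ℝ) * (q j : ℝ))|
        ≤ ∑ j, |(x j : ℝ) * f (Pi.single j 1) - (x j : ℝ) * (q j : ℝ)| :=
          Finset.abs_sum_le_sum_abs _ _
      _ ≤ ∑ j, |(x j : ℝ)| * (u / (M₀ : ℝ)) := by
          refine Finset.sum_le_sum fun j _ => ?_
          rw [← mul_sub, abs_mul]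
          exact mul_le_mul_of_nonneg_left (hq j).le (abs_nonneg _)
      _ = (∑ j, |(x j : ℝ)|) * (u / (M₀ : ℝ)) := (Finset.sum_mul _ _ _).symm
      _ ≤ ((M₀ : ℝ) - 1) * (u / (M₀ : ℝ)) := by
          refine mul_le_mul_of_nonneg_right ?_ hδpos.le
          have : ((∑ j, |x j| : ℚ) : ℝ) ≤ ((M₀ - 1 : ℚ) : ℝ) := by exact_mod_cast hbound
          push_cast at this
          simpa using this
      _ < (M₀ : ℝ) * (u / (M₀ : ℝ)) := by
          refine mul_lt_mul_of_pos_right (by linarith) hδpos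
      _ = u := by field_simp
  have hpos : (0:ℝ) < ∑ j, (x j : ℝ) * (q j : ℝ) := by
    have h1 := hxu x hx
    have h2 := abs_sub_lt_iff.mp hdiff
    linarith [h2.1]
  have : (0:ℚ) < ∑ j, x j * q j := by exact_mod_cast hpos
  calc (0:ℚ) < ∑ j, x j * q j := this
    _ = ∑ j, q j * x j := Finset.sum_congr rfl fun j _ => mul_comm _ _


/-- Existence of a Demazure root at an extremal ray of a pointed rational
polyhedral cone: if `v₀ ∈ ℤ^n` is primitive, the cone generated by
`v₀, v₁, …, v_m` in `ℚ^n` is pointed, and `v₀` does not lie in the cone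
generated by `v₁, …, v_m`, then there is a group homomorphism
`e : ℤ^n → ℤ` with `e(v₀) = -1` and `e(v_i) ≥ 0` for `i = 1, …, m`. -/
theorem exists_demazure_root
    (n m : ℕ) (hn : 1 ≤ n)
    (v₀ : Fin n → ℤ) (v : Fin m → Fin n → ℤ)
    (hprim : Finset.univ.gcd v₀ = 1)
    (C : Set (Fin n → ℚ))
    (hC : C = {x : Fin n → ℚ | ∃ (c₀ : ℚ) (c : Fin m → ℚ),
      0 ≤ c₀ ∧ (∀ i, 0 ≤ c i) ∧
      x = c₀ • (fun j => ((v₀ j : ℚ))) + ∑ i, c i • fun j => ((v i j : ℚ))})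
    (hpointed : ∀ x ∈ C, -x ∈ C → x = 0)
    (hextremal : ¬ ∃ c : Fin m → ℚ, (∀ i, 0 ≤ c i) ∧
      (fun j => ((v₀ j : ℚ))) = ∑ i, c i • fun j => ((v i j : ℚ))) :
    ∃ e : (Fin n → ℤ) →+ ℤ, e v₀ = -1 ∧ ∀ i, 0 ≤ e (v i) := by
  classical
  subst hC
  -- Bezout coefficients for v₀
  obtain ⟨c, hc⟩ := my_bezout Finset.univ v₀
  rw [hprim] at hc
  have hcQ : ∑ j, (c j : ℚ) * (v₀ j : ℚ) = 1 := by exact_mod_cast congrArg (Int.cast : ℤ → ℚ) hc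
  -- the key cone fact
  have CF : ∀ t : Fin m → ℚ, (∀ i, 0 ≤ t i) → ∀ t₀ : ℚ,
      (∀ j, ∑ i, t i * (v i j : ℚ) = t₀ * (v₀ j : ℚ)) →
      ∀ i₀, 0 < t i₀ → v i₀ = 0 := by
    intro t ht t₀ hsum i₀ hi₀
    rcases lt_or_ge 0 t₀ with hpos | hnonpos
    · exfalso
      apply hextremal
      refine ⟨fun i => t i / t₀, fun i => div_nonneg (ht i) hpos.le, ?_⟩
      funext j
      simp only [Finset.sum_apply, Pi.smul_apply, smul_eq_mul]
      rw [eq_comm]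
      calc ∑ i, t i / t₀ * (v i j : ℚ) = (∑ i, t i * (v i j : ℚ)) / t₀ := by
            rw [Finset.sum_div]
            exact Finset.sum_congr rfl fun i _ => by ring
        _ = t₀ * (v₀ j : ℚ) / t₀ := by rw [hsum j]
        _ = (v₀ j : ℚ) := by field_simp
    · -- x = t i₀ • (v i₀)ℚ belongs to the cone together with its negative
      set x : Fin n → ℚ := fun j => t i₀ * (v i₀ j : ℚ) with hxdef
      have hx : x ∈ {x : Fin n → ℚ | ∃ (c₀ : ℚ) (c : Fin m → ℚ),
          0 ≤ c₀ ∧ (∀ i, 0 ≤ c i) ∧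
          x = c₀ • (fun j => ((v₀ j : ℚ))) + ∑ i, c i • fun j => ((v i j : ℚ))} := by
        refine ⟨0, fun i => if i = i₀ then t i₀ else 0, le_refl 0, fun i => ?_, ?_⟩
        · show (0:ℚ) ≤ if i = i₀ then t i₀ else 0
          split_ifs
          · exact hi₀.le
          · exact le_refl 0
        funext j
        simp only [Pi.add_apply, Pi.smul_apply, smul_eq_mul, Finset.sum_apply, zero_mul, zero_add]
        rw [Finset.sum_congr rfl (fun i _ => show
          (if i = i₀ then t i₀ else 0) * (v i j : ℚ) =
            (if i = i₀ then t i₀ * (v i j : ℚ) else 0) by split_ifs <;> simp)]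
        rw [Finset.sum_ite_eq' Finset.univ i₀ (fun i => t i₀ * (v i j : ℚ))]
        simp [hxdef]
      have hnx : -x ∈ {x : Fin n → ℚ | ∃ (c₀ : ℚ) (c : Fin m → ℚ),
          0 ≤ c₀ ∧ (∀ i, 0 ≤ c i) ∧
          x = c₀ • (fun j => ((v₀ j : ℚ))) + ∑ i, c i • fun j => ((v i j : ℚ))} := by
        refine ⟨-t₀, fun i => if i = i₀ then 0 else t i, neg_nonneg.mpr hnonpos,
          fun i => ?_, ?_⟩
        · show (0:ℚ) ≤ if i = i₀ then 0 else t i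
          split_ifs
          · exact le_refl 0
          · exact ht i
        funext j
        simp only [Pi.add_apply, Pi.neg_apply, Pi.smul_apply, smul_eq_mul, Finset.sum_apply]
        have hsplit : ∑ i, (if i = i₀ then 0 else t i) * (v i j : ℚ)
            = (∑ i, t i * (v i j : ℚ)) - t i₀ * (v i₀ j : ℚ) := by
          rw [Finset.sum_congr rfl (fun i _ => show
            (if i = i₀ then 0 else t i) * (v i j : ℚ) =
              t i * (v i j : ℚ) - (if i = i₀ then t i * (v i j : ℚ) else 0) by
                split_ifs with h; · subst h; ring
                · ring)]
          rw [Finset.sum_sub_distrib,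
            Finset.sum_ite_eq' Finset.univ i₀ (fun i => t i * (v i j : ℚ))]
          simp
        rw [hsplit, hsum j]
        simp only [hxdef]
        ring
      have hx0 := hpointed x hx hnx
      have hvi : ∀ j, (v i₀ j : ℚ) = 0 := by
        intro j
        have := congrFun hx0 j
        simp only [hxdef, Pi.zero_apply] at this
        rcases mul_eq_zero.mp this with h | h
        · exact absurd h hi₀.ne'
        · exact h
      funext j
      exact_mod_cast hvi j
  -- v i proportional to v₀ forces v i = 0 (via CF); now set up the quotient vectors
  set k : Fin m → ℤ := fun i => ∑ j, c j * v i j with hkdef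
  have hkQ : ∀ i, ((k i : ℤ) : ℚ) = ∑ j, (c j : ℚ) * (v i j : ℚ) := by
    intro i; rw [hkdef]; push_cast; rfl
  set w : Fin m → (Fin n → ℚ) :=
    fun i => fun j => (v i j : ℚ) - (k i : ℚ) * (v₀ j : ℚ) with hwdef
  set S : Finset (Fin n → ℚ) :=
    (Finset.univ.filter (fun i => v i ≠ 0)).image w with hSdef
  -- the separation hypothesis
  have hyp : ∀ (ι : Type) [Fintype ι] (G : ι → (Fin n → ℚ)), (∀ i, G i ∈ S) →
      ∀ y : ι → ℚ, (∀ i, 0 ≤ y i) → ∑ i, y i = 1 → ∑ i, y i • G i ≠ 0 := by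
    intro ι _ G hGS y hy0 hysum hcomb0
    have hmem : ∀ i : ι, ∃ a : Fin m, (v a ≠ 0) ∧ w a = G i := by
      intro i
      obtain ⟨a, ha, haw⟩ := Finset.mem_image.mp (hGS i)
      exact ⟨a, (Finset.mem_filter.mp ha).2, haw⟩
    choose κ hκ0 hκw using hmem
    set t : Fin m → ℚ := fun a => ∑ i ∈ Finset.univ.filter (fun i => κ i = a), y i with htdef
    have ht : ∀ a, 0 ≤ t a := fun a => Finset.sum_nonneg fun i _ => hy0 i
    set t₀ : ℚ := ∑ i, y i * (k (κ i) : ℚ) with ht₀def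
    have hcombj : ∀ j, ∑ i, y i * G i j = 0 := by
      intro j
      have := congrFun hcomb0 j
      simpa only [Finset.sum_apply, Pi.smul_apply, smul_eq_mul, Pi.zero_apply] using this
    have hsum : ∀ j, ∑ a, t a * (v a j : ℚ) = t₀ * (v₀ j : ℚ) := by
      intro j
      have h1 : ∑ a, t a * (v a j : ℚ) = ∑ i, y i * (v (κ i) j : ℚ) := by
        rw [← Finset.sum_fiberwise_of_maps_to (fun i _ => Finset.mem_univ (κ i))
          (fun i => y i * (v (κ i) j : ℚ))]
        refine Finset.sum_congr rfl fun a _ => ?_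
        rw [htdef]
        simp only []
        rw [Finset.sum_mul]
        refine Finset.sum_congr rfl fun i hi => ?_
        rw [(Finset.mem_filter.mp hi).2]
      have h2 : ∀ i, y i * (v (κ i) j : ℚ)
          = y i * G i j + y i * (k (κ i) : ℚ) * (v₀ j : ℚ) := by
        intro i
        rw [← hκw i, hwdef]
        simp only []
        ring
      rw [h1, Finset.sum_congr rfl fun i _ => h2 i, Finset.sum_add_distrib, hcombj j,
        zero_add, ht₀def, Finset.sum_mul]
    have hCF := CF t ht t₀ hsum
    have hex : ∃ i, 0 < y i := by
      by_contra hno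
      push_neg at hno
      have : ∀ i ∈ Finset.univ, y i = 0 := fun i _ => le_antisymm (hno i) (hy0 i)
      rw [Finset.sum_congr rfl this] at hysum
      simp at hysum
    obtain ⟨i₁, hi₁⟩ := hex
    have hta : 0 < t (κ i₁) := by
      have hmem1 : i₁ ∈ Finset.univ.filter (fun i => κ i = κ i₁) := by simp
      have := Finset.single_le_sum (f := fun i => y i)
        (fun i _ => hy0 i) hmem1
      rw [htdef]
      exact lt_of_lt_of_le hi₁ this
    exact hκ0 i₁ (hCF (κ i₁) hta)
  obtain ⟨q, hq⟩ := my_sep S hyp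
  have hqw : ∀ a, v a ≠ 0 → 0 < ∑ j, q j * w a j := by
    intro a ha
    exact hq (w a) (Finset.mem_image.mpr ⟨a, Finset.mem_filter.mpr ⟨Finset.mem_univ a, ha⟩, rfl⟩)
  -- the rational functional ρ
  set A : ℚ := ∑ l, q l * (v₀ l : ℚ) with hAdef
  set ρ : Fin n → ℚ := fun j => q j - A * (c j : ℚ) with hρdef
  have hρv₀ : ∑ j, ρ j * (v₀ j : ℚ) = 0 := by
    rw [hρdef]
    simp only []
    rw [Finset.sum_congr rfl (fun j _ => show
      (q j - A * (c j : ℚ)) * (v₀ j : ℚ)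
        = q j * (v₀ j : ℚ) - A * ((c j : ℚ) * (v₀ j : ℚ)) by ring)]
    rw [Finset.sum_sub_distrib, ← Finset.mul_sum, hcQ, ← hAdef]
    ring
  have hρvi : ∀ a, v a ≠ 0 → 0 < ∑ j, ρ j * (v a j : ℚ) := by
    intro a ha
    have h1 : ∑ j, ρ j * (v a j : ℚ) = ∑ j, q j * w a j := by
      rw [hρdef, hwdef]
      simp only []
      rw [Finset.sum_congr rfl (fun j _ => show
        (q j - A * (c j : ℚ)) * (v a j : ℚ)
          = q j * (v a j : ℚ) - A * ((c j : ℚ) * (v a j : ℚ)) by ring)]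
      rw [Finset.sum_sub_distrib, ← Finset.mul_sum, ← hkQ a]
      rw [Finset.sum_congr rfl (fun j _ => show
        q j * ((v a j : ℚ) - (k a : ℚ) * (v₀ j : ℚ))
          = q j * (v a j : ℚ) - (k a : ℚ) * (q j * (v₀ j : ℚ)) by ring)]
      rw [Finset.sum_sub_distrib, ← Finset.mul_sum, ← hAdef]
      ring
    rw [h1]
    exact hqw a ha
  -- clear denominators
  set N : ℕ := ∏ j, (ρ j).den with hNdef
  have hNpos : 0 < N := Finset.prod_pos fun j _ => (ρ j).pos
  set H : Fin n → ℤ := fun j => (ρ j).num * ((N : ℤ) / ((ρ j).den : ℤ)) with hHdef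
  have hH : ∀ j, (H j : ℚ) = ρ j * (N : ℚ) := by
    intro j
    have hdvd : ((ρ j).den : ℤ) ∣ (N : ℤ) :=
      Int.natCast_dvd_natCast.mpr (Finset.dvd_prod_of_mem _ (Finset.mem_univ j))
    rw [hHdef]
    push_cast [Int.cast_div_charZero hdvd]
    have hden : ((ρ j).den : ℚ) ≠ 0 := by exact_mod_cast (ρ j).den_nz
    have key : ((ρ j).num : ℚ) = ρ j * ((ρ j).den : ℚ) :=
      (div_eq_iff hden).mp (Rat.num_div_den (ρ j))
    have hsplit2 : ((ρ j).num : ℚ) * ((N : ℚ) / ((ρ j).den : ℚ))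
        = (((ρ j).num : ℚ) * (N : ℚ)) / ((ρ j).den : ℚ) := by ring
    rw [hsplit2, div_eq_iff hden]
    linear_combination ((N : ℚ)) * key
  have hHv₀ : ∑ j, H j * v₀ j = 0 := by
    have : ((∑ j, H j * v₀ j : ℤ) : ℚ) = 0 := by
      push_cast
      rw [Finset.sum_congr rfl (fun j _ => show
        ((H j : ℤ) : ℚ) * ((v₀ j : ℤ) : ℚ) = (N : ℚ) * (ρ j * (v₀ j : ℚ)) by
          rw [hH j]; ring)]
      rw [← Finset.mul_sum, hρv₀, mul_zero]
    exact_mod_cast this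
  have hHvi : ∀ a, v a ≠ 0 → 1 ≤ ∑ j, H j * v a j := by
    intro a ha
    have : (0 : ℚ) < ((∑ j, H j * v a j : ℤ) : ℚ) := by
      push_cast
      rw [Finset.sum_congr rfl (fun j _ => show
        ((H j : ℤ) : ℚ) * ((v a j : ℤ) : ℚ) = (N : ℚ) * (ρ j * (v a j : ℚ)) by
          rw [hH j]; ring)]
      rw [← Finset.mul_sum]
      have hN : (0:ℚ) < (N:ℚ) := by exact_mod_cast hNpos
      exact mul_pos hN (hρvi a ha)
    have h0 : 0 < ∑ j, H j * v a j := by exact_mod_cast this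
    omega
  -- assemble the integral functional
  set T : ℤ := ∑ i, |k i| with hTdef
  have hT0 : 0 ≤ T := Finset.sum_nonneg fun i _ => abs_nonneg _
  have hTk : ∀ i, k i ≤ T := fun i =>
    le_trans (le_abs_self _) (Finset.single_le_sum (f := fun i => |k i|)
      (fun i _ => abs_nonneg _) (Finset.mem_univ i))
  refine ⟨AddMonoidHom.mk' (fun x => ∑ j, (T * H j - c j) * x j) ?_, ?_, ?_⟩
  · intro a b
    rw [← Finset.sum_add_distrib]
    exact Finset.sum_congr rfl fun j _ => by simp only [Pi.add_apply]; ring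
  · show ∑ j, (T * H j - c j) * v₀ j = -1
    rw [Finset.sum_congr rfl (fun j _ => show (T * H j - c j) * v₀ j
        = T * (H j * v₀ j) - c j * v₀ j by ring)]
    rw [Finset.sum_sub_distrib, ← Finset.mul_sum, hHv₀, hc]
    ring
  · intro i
    show 0 ≤ ∑ j, (T * H j - c j) * v i j
    rw [Finset.sum_congr rfl (fun j _ => show (T * H j - c j) * v i j
        = T * (H j * v i j) - c j * v i j by ring)]
    have hki : k i = ∑ x, c x * v i x := rfl
    rw [Finset.sum_sub_distrib, ← Finset.mul_sum, ← hki]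
    by_cases hvi : v i = 0
    · simp [hvi, hkdef]
    · have h1 := hHvi i hvi
      have h2 := hTk i
      have h3 : T ≤ T * ∑ j, H j * v i j := le_mul_of_one_le_right hT0 h1
      omega
end

section
/- Let n ≥ 2 and let v₀, v₁, …, v_m ∈ ℤ^n (m ≥ 0). Assume: (i) v₀ is primitive; (ii) the cone C ⊆ ℚ^n generated by v₀, v₁, …, v_m is pointed, i.e., C ∩ (−C) = {0}; (iii) v₀ does not lie in the cone generated by v₁, …, v_m. Then the set of group homomorphisms e : ℤ^n → ℤ satisfying e(v₀) = −1 and e(v_i) ≥ 0 for all i = 1, …, m is infinite. (In other words, for n ≥ 2 the set ℛ_τ of Demazure roots associated with a fixed extremal ray τ of a pointed rational polyhedral cone is infinite.) -/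
namespace DemazureAux

open Finset

variable {n : ℕ}

/-- rational dot product -/
def dQ (x y : Fin n → ℚ) : ℚ := ∑ j, x j * y j

/-- integer dot product -/
def dZ (x y : Fin n → ℤ) : ℤ := ∑ j, x j * y j

lemma dQ_add_left (x x' y : Fin n → ℚ) : dQ (x + x') y = dQ x y + dQ x' y := by
  simp [dQ, add_mul, Finset.sum_add_distrib]

lemma dQ_smul_left (c : ℚ) (x y : Fin n → ℚ) : dQ (c • x) y = c * dQ x y := by
  simp [dQ, Finset.mul_sum, mul_assoc]

lemma dQ_neg_left (x y : Fin n → ℚ) : dQ (-x) y = - dQ x y := by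
  simp [dQ, Finset.sum_neg_distrib]

lemma dQ_sub_left (x x' y : Fin n → ℚ) : dQ (x - x') y = dQ x y - dQ x' y := by
  simp [dQ, sub_mul, Finset.sum_sub_distrib]

lemma dQ_zero_left (y : Fin n → ℚ) : dQ 0 y = 0 := by simp [dQ]

lemma dQ_zero_right (x : Fin n → ℚ) : dQ x 0 = 0 := by simp [dQ]

lemma dQ_neg_right (x y : Fin n → ℚ) : dQ x (-y) = - dQ x y := by
  simp [dQ, Finset.sum_neg_distrib]

lemma dQ_sub_right (x y y' : Fin n → ℚ) : dQ x (y - y') = dQ x y - dQ x y' := by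
  simp [dQ, mul_sub, Finset.sum_sub_distrib]

lemma dQ_smul_right (c : ℚ) (x y : Fin n → ℚ) : dQ x (c • y) = c * dQ x y := by
  simp [dQ, Finset.mul_sum, mul_left_comm]

lemma dQ_sum_left {m : ℕ} (f : Fin m → Fin n → ℚ) (x : Fin n → ℚ) :
    dQ (∑ i, f i) x = ∑ i, dQ (f i) x := by
  simp [dQ, Finset.sum_mul]
  rw [Finset.sum_comm]

lemma dQ_self_pos {x : Fin n → ℚ} (hx : x ≠ 0) : 0 < dQ x x := by
  obtain ⟨j, hj⟩ := Function.ne_iff.mp hx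
  refine Finset.sum_pos' (fun i _ => mul_self_nonneg _) ⟨j, Finset.mem_univ j, ?_⟩
  exact mul_self_pos.mpr hj

/-- Farkas' lemma over ℚ for finitely generated cones. -/
lemma farkas : ∀ (m : ℕ) (w : Fin m → (Fin n → ℚ)) (b : Fin n → ℚ),
    (¬ ∃ c : Fin m → ℚ, (∀ i, 0 ≤ c i) ∧ b = ∑ i, c i • w i) →
    ∃ y : Fin n → ℚ, dQ y b < 0 ∧ ∀ i, 0 ≤ dQ y (w i) := by
  intro m
  induction m with
  | zero =>
    intro w b hb
    have hbne : b ≠ 0 := by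
      rintro rfl
      exact hb ⟨fun i => 0, fun i => le_refl _, by simp⟩
    refine ⟨-b, ?_, fun i => i.elim0⟩
    have := dQ_self_pos hbne
    rw [dQ_neg_left]; linarith
  | succ m ih =>
    intro w b hb
    set w0 : Fin n → ℚ := w 0 with hw0
    set wr : Fin m → Fin n → ℚ := fun i => w i.succ with hwr
    have hb1 : ¬ ∃ c : Fin m → ℚ, (∀ i, 0 ≤ c i) ∧ b = ∑ i, c i • wr i := by
      rintro ⟨c, hc, hcb⟩
      refine hb ⟨Fin.cons 0 c, ?_, ?_⟩
      · intro i
        refine Fin.cases ?_ ?_ i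
        · simp
        · intro j; simpa using hc j
      · rw [Fin.sum_univ_succ]
        simpa using hcb
    obtain ⟨y, hyb, hyw⟩ := ih wr b hb1
    by_cases h0 : 0 ≤ dQ y w0
    · refine ⟨y, hyb, fun i => ?_⟩
      refine Fin.cases h0 (fun j => hyw j) i
    push_neg at h0
    set pr : (Fin n → ℚ) → (Fin n → ℚ) := fun x => x - (dQ y x / dQ y w0) • w0 with hpr
    have hb2 : ¬ ∃ c : Fin m → ℚ, (∀ i, 0 ≤ c i) ∧ pr b = ∑ i, c i • pr (wr i) := by
      rintro ⟨c, hc, hcb⟩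
      set lam : ℚ := dQ y b / dQ y w0 - ∑ i, c i * (dQ y (wr i) / dQ y w0) with hlamdef
      have expand : ∑ i, c i • pr (wr i)
          = (∑ i, c i • wr i) - (∑ i, c i * (dQ y (wr i) / dQ y w0)) • w0 := by
        simp only [hpr, smul_sub, smul_smul]
        rw [Finset.sum_sub_distrib, Finset.sum_smul]
      have hblam : b = lam • w0 + ∑ i, c i • wr i := by
        have h := hcb
        rw [expand] at h
        have h2 : b = (∑ i, c i • wr i) - (∑ i, c i * (dQ y (wr i) / dQ y w0)) • w0
            + (dQ y b / dQ y w0) • w0 := by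
          rw [← h]; simp [hpr]
        rw [h2, hlamdef, sub_smul]
        abel
      have hlam : 0 ≤ lam := by
        have h1 : 0 < dQ y b / dQ y w0 := div_pos_of_neg_of_neg hyb h0
        have h2 : ∑ i, c i * (dQ y (wr i) / dQ y w0) ≤ 0 := by
          refine Finset.sum_nonpos fun i _ => ?_
          exact mul_nonpos_of_nonneg_of_nonpos (hc i)
            (div_nonpos_of_nonneg_of_nonpos (hyw i) (le_of_lt h0))
        rw [hlamdef]; linarith
      refine hb ⟨Fin.cons lam c, ?_, ?_⟩
      · intro i
        refine Fin.cases ?_ ?_ i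
        · simpa using hlam
        · intro j; simpa using hc j
      · rw [Fin.sum_univ_succ]
        simpa using hblam
    obtain ⟨y', hy'b, hy'w⟩ := ih (fun i => pr (wr i)) (pr b) hb2
    refine ⟨y' - (dQ y' w0 / dQ y w0) • y, ?_, ?_⟩
    · have key : dQ (y' - (dQ y' w0 / dQ y w0) • y) b = dQ y' (pr b) := by
        rw [dQ_sub_left, dQ_smul_left, hpr]
        simp only []
        rw [dQ_sub_right, dQ_smul_right]
        ring
      rw [key]; exact hy'b
    · intro i
      have key : ∀ x, dQ (y' - (dQ y' w0 / dQ y w0) • y) x = dQ y' (pr x) := by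
        intro x
        rw [dQ_sub_left, dQ_smul_left, hpr]
        simp only []
        rw [dQ_sub_right, dQ_smul_right]
        ring
      refine Fin.cases ?_ ?_ i
      · rw [key]
        have : pr w0 = 0 := by
          simp only [hpr]
          rw [div_self (ne_of_lt h0), one_smul, sub_self]
        rw [this, dQ_zero_right]
      · intro j
        rw [key]
        exact hy'w j


lemma dZ_zero_right (x : Fin n → ℤ) : dZ x 0 = 0 := by simp [dZ]

lemma dZ_comm (x y : Fin n → ℤ) : dZ x y = dZ y x := by
  simp [dZ, mul_comm]

/-- dot product of a pointwise combination -/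
lemma dZ_comb (a b : ℤ) (x y w : Fin n → ℤ) :
    dZ (fun j => a * x j + b * y j) w = a * dZ x w + b * dZ y w := by
  simp [dZ, add_mul, mul_assoc, Finset.sum_add_distrib, Finset.mul_sum]

lemma dZ_single (j : Fin n) (y : Fin n → ℤ) : dZ (Pi.single j 1) y = y j := by
  simp [dZ, Pi.single_apply]

/-- Bézout for a Finset gcd over ℤ. -/
lemma bezout_aux (v₀ : Fin n → ℤ) (s : Finset (Fin n)) :
    ∃ u : Fin n → ℤ, (s.gcd v₀ : ℤ) = ∑ j ∈ s, v₀ j * u j := by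
  classical
  induction s using Finset.induction_on with
  | empty => exact ⟨0, by simp⟩
  | @insert a s ha ih =>
    obtain ⟨u, hu⟩ := ih
    set A := Int.gcdA (v₀ a) (s.gcd v₀)
    set B := Int.gcdB (v₀ a) (s.gcd v₀)
    refine ⟨fun j => if j = a then A else u j * B, ?_⟩
    rw [Finset.gcd_insert, ← Int.coe_gcd, Int.gcd_eq_gcd_ab, Finset.sum_insert ha]
    have h2 : ∀ j ∈ s, v₀ j * (if j = a then A else u j * B) = (v₀ j * u j) * B :=
      fun j hj => by rw [if_neg (by rintro rfl; exact ha hj)]; ring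
    calc v₀ a * A + (s.gcd v₀ : ℤ) * B
        = v₀ a * (if a = a then A else u a * B)
          + ∑ j ∈ s, v₀ j * (if j = a then A else u j * B) := by
          rw [if_pos rfl, Finset.sum_congr rfl h2, ← Finset.sum_mul, ← hu]
      _ = _ := rfl

/-- clearing denominators -/
lemma exists_int_rep (y : Fin n → ℚ) :
    ∃ (N : ℤ) (z : Fin n → ℤ), 0 < N ∧ ∀ j, (z j : ℚ) = (N : ℚ) * y j := by
  classical
  set N : ℤ := ∏ j, ((y j).den : ℤ) with hN
  have hNpos : 0 < N := Finset.prod_pos fun j _ => by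
    exact_mod_cast (y j).den_pos
  refine ⟨N, fun j => N / ((y j).den : ℤ) * (y j).num, hNpos, fun j => ?_⟩
  have hdvd : ((y j).den : ℤ) ∣ N := Finset.dvd_prod_of_mem _ (Finset.mem_univ j)
  obtain ⟨t, ht⟩ := hdvd
  have hden0 : ((y j).den : ℤ) ≠ 0 := by exact_mod_cast (y j).den_pos.ne'
  have hdiv : N / ((y j).den : ℤ) = t := by
    rw [ht, Int.mul_ediv_cancel_left _ hden0]
  have hdenQ : (((y j).den : ℤ) : ℚ) ≠ 0 := by exact_mod_cast hden0
  have hnum : (((y j).num : ℤ) : ℚ) = y j * (((y j).den : ℤ) : ℚ) := by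
    have h := Rat.num_div_den (y j)
    push_cast
    exact (div_eq_iff (by exact_mod_cast hden0)).mp h
  show ((N / ((y j).den : ℤ) * (y j).num : ℤ) : ℚ) = (N : ℚ) * y j
  rw [hdiv]
  push_cast
  rw [hnum]
  have htq : (N : ℚ) = ((y j).den : ℚ) * (t : ℚ) := by exact_mod_cast ht
  rw [htq]; push_cast; ring

/-- the additive hom given by dot product with `y` -/
def toHom (y : Fin n → ℤ) : (Fin n → ℤ) →+ ℤ :=
  AddMonoidHom.mk' (fun x => dZ y x)
    (by intro a b; simp [dZ, mul_add, Finset.sum_add_distrib])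

lemma toHom_apply (y x : Fin n → ℤ) : toHom y x = dZ y x := rfl

lemma toHom_single (y : Fin n → ℤ) (j : Fin n) : toHom y (Pi.single j 1) = y j := by
  simp [toHom_apply, dZ, Pi.single_apply]

/-- transfer: dot with casts -/
lemma dQ_cast (z w : Fin n → ℤ) :
    dQ (fun j => (z j : ℚ)) (fun j => (w j : ℚ)) = ((dZ z w : ℤ) : ℚ) := by
  simp [dQ, dZ]

lemma dQ_scale {N : ℚ} {y : Fin n → ℚ} {z : Fin n → ℤ}
    (h : ∀ j, (z j : ℚ) = N * y j) (x : Fin n → ℚ) :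
    dQ (fun j => (z j : ℚ)) x = N * dQ y x := by
  simp only [dQ, Finset.mul_sum]
  exact Finset.sum_congr rfl fun j _ => by rw [h j, mul_assoc]

end DemazureAux

open DemazureAux Finset in
/-- For `n ≥ 2`, the set `ℛ_τ` of Demazure roots associated with a fixed
extremal ray `τ = ℚ_{≥0} v₀` of a pointed rational polyhedral cone generated
by `v₀, v₁, …, v_m ∈ ℤ^n` (with `v₀` primitive) is infinite. -/
theorem demazure_roots_infinite
    (n m : ℕ) (hn : 2 ≤ n)
    (v₀ : Fin n → ℤ) (v : Fin m → Fin n → ℤ)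
    (hprim : Finset.univ.gcd v₀ = 1)
    (C : Set (Fin n → ℚ))
    (hC : C = {x : Fin n → ℚ | ∃ (c₀ : ℚ) (c : Fin m → ℚ),
      0 ≤ c₀ ∧ (∀ i, 0 ≤ c i) ∧
      x = c₀ • (fun j => ((v₀ j : ℚ))) + ∑ i, c i • fun j => ((v i j : ℚ))})
    (hpointed : ∀ x ∈ C, -x ∈ C → x = 0)
    (hextremal : ¬ ∃ c : Fin m → ℚ, (∀ i, 0 ≤ c i) ∧
      (fun j => ((v₀ j : ℚ))) = ∑ i, c i • fun j => ((v i j : ℚ))) :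
    {e : (Fin n → ℤ) →+ ℤ | e v₀ = -1 ∧ ∀ i, 0 ≤ e (v i)}.Infinite := by
  classical
  -- v₀ is nonzero
  have hv0ne : v₀ ≠ 0 := by
    rintro rfl
    have h0 : (Finset.univ : Finset (Fin n)).gcd (0 : Fin n → ℤ) = 0 :=
      Finset.gcd_eq_zero_iff.mpr fun i _ => rfl
    rw [h0] at hprim
    exact absurd hprim (by norm_num)
  have castne : ∀ x : Fin n → ℤ, x ≠ 0 → (fun j => ((x j : ℚ))) ≠ 0 := by
    intro x hx h
    apply hx; funext j
    have h2 := congrFun h j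
    simp only [Pi.zero_apply] at h2
    exact_mod_cast h2
  -- the generators belong to C
  have hQ0C : (fun j => ((v₀ j : ℚ))) ∈ C := by
    rw [hC]
    exact ⟨1, 0, zero_le_one, fun i => le_rfl, by simp⟩
  have hQVC : ∀ i₀, (fun j => ((v i₀ j : ℚ))) ∈ C := by
    intro i₀
    rw [hC]
    refine ⟨0, Pi.single i₀ 1, le_rfl, ?_, ?_⟩
    · intro i; rw [Pi.single_apply]; split <;> norm_num
    · rw [zero_smul, zero_add]
      rw [Finset.sum_eq_single i₀
        (fun b _ hb => by rw [Pi.single_eq_of_ne hb, zero_smul])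
        (fun h => absurd (Finset.mem_univ i₀) h)]
      rw [Pi.single_eq_same, one_smul]
  -- the combined generator family
  set W : Fin (m+1) → Fin n → ℚ :=
    Fin.cons (fun j => ((v₀ j : ℚ))) (fun i => fun j => ((v i j : ℚ))) with hW
  -- for each nonzero generator g there is a dual vector strictly positive on g
  have hkey : ∀ g : Fin n → ℚ, g ∈ C →
      ∃ y : Fin n → ℚ, (g ≠ 0 → 0 < dQ y g) ∧ 0 ≤ dQ y (fun j => ((v₀ j : ℚ))) ∧
        ∀ i, 0 ≤ dQ y (fun j => ((v i j : ℚ))) := by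
    intro g hg
    by_cases hgz : g = 0
    · exact ⟨0, fun h => absurd hgz h, by rw [dQ_zero_left], fun i => by rw [dQ_zero_left]⟩
    · have hng : ¬ ∃ c : Fin (m+1) → ℚ, (∀ i, 0 ≤ c i) ∧ -g = ∑ i, c i • W i := by
        rintro ⟨c, hc, hcg⟩
        apply hgz
        refine hpointed g hg ?_
        rw [hC]
        refine ⟨c 0, fun i => c i.succ, hc 0, fun i => hc i.succ, ?_⟩
        rw [hcg, Fin.sum_univ_succ]
        simp [hW, Fin.cons_zero, Fin.cons_succ]
      obtain ⟨y, hy1, hy2⟩ := farkas (m+1) W (-g) hng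
      rw [dQ_neg_right] at hy1
      refine ⟨y, fun _ => by linarith, ?_, fun i => ?_⟩
      · simpa [hW] using hy2 0
      · simpa [hW] using hy2 i.succ
  obtain ⟨y0, hy01, hy02, hy03⟩ := hkey _ hQ0C
  choose Y hY1 hY2 hY3 using fun i => hkey _ (hQVC i)
  set yA : Fin n → ℚ := y0 + ∑ i, Y i with hyA
  have hyA_eq : ∀ x, dQ yA x = dQ y0 x + ∑ i, dQ (Y i) x := by
    intro x; rw [hyA, dQ_add_left, dQ_sum_left]
  have hyA0 : 0 < dQ yA (fun j => ((v₀ j : ℚ))) := by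
    rw [hyA_eq]
    have h1 : 0 < dQ y0 (fun j => ((v₀ j : ℚ))) := hy01 (castne v₀ hv0ne)
    have h2 : 0 ≤ ∑ i, dQ (Y i) (fun j => ((v₀ j : ℚ))) :=
      Finset.sum_nonneg fun i _ => hY2 i
    linarith
  have hyAi : ∀ i, 0 ≤ dQ yA (fun j => ((v i j : ℚ))) := by
    intro i
    rw [hyA_eq]
    have h2 : 0 ≤ ∑ i', dQ (Y i') (fun j => ((v i j : ℚ))) :=
      Finset.sum_nonneg fun i' _ => hY3 i' i
    have h1 := hy03 i
    linarith
  have hyAipos : ∀ i, v i ≠ 0 → 0 < dQ yA (fun j => ((v i j : ℚ))) := by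
    intro i hi
    rw [hyA_eq]
    have h1 := hy03 i
    have h2 : dQ (Y i) (fun j => ((v i j : ℚ))) ≤ ∑ i', dQ (Y i') (fun j => ((v i j : ℚ))) :=
      Finset.single_le_sum (fun i' _ => hY3 i' i) (Finset.mem_univ i)
    have h3 : 0 < dQ (Y i) (fun j => ((v i j : ℚ))) := hY1 i (castne _ hi)
    linarith
  -- Farkas for the extremal ray
  obtain ⟨ys, hys1, hys2⟩ :=
    farkas m (fun i => fun j => ((v i j : ℚ))) (fun j => ((v₀ j : ℚ))) hextremal
  -- integerize ys
  obtain ⟨Ns, zs, hNs, hzs⟩ := exists_int_rep ys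
  have hzsv0 : dZ zs v₀ < 0 := by
    have h : ((dZ zs v₀ : ℤ) : ℚ) < 0 := by
      rw [← dQ_cast, dQ_scale hzs]
      exact mul_neg_of_pos_of_neg (by exact_mod_cast hNs) hys1
    exact_mod_cast h
  have hzsv : ∀ i, 0 ≤ dZ zs (v i) := by
    intro i
    have h : (0:ℚ) ≤ ((dZ zs (v i) : ℤ) : ℚ) := by
      rw [← dQ_cast, dQ_scale hzs]
      exact mul_nonneg (by exact_mod_cast hNs.le) (hys2 i)
    exact_mod_cast h
  -- integerize yA
  obtain ⟨Na, za, hNa, hza⟩ := exists_int_rep yA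
  have hzav0 : 0 < dZ za v₀ := by
    have h : (0:ℚ) < ((dZ za v₀ : ℤ) : ℚ) := by
      rw [← dQ_cast, dQ_scale hza]
      exact mul_pos (by exact_mod_cast hNa) hyA0
    exact_mod_cast h
  have hzav : ∀ i, 0 ≤ dZ za (v i) := by
    intro i
    have h : (0:ℚ) ≤ ((dZ za (v i) : ℤ) : ℚ) := by
      rw [← dQ_cast, dQ_scale hza]
      exact mul_nonneg (by exact_mod_cast hNa.le) (hyAi i)
    exact_mod_cast h
  have hzapos : ∀ i, v i ≠ 0 → 1 ≤ dZ za (v i) := by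
    intro i hi
    have h : (0:ℚ) < ((dZ za (v i) : ℤ) : ℚ) := by
      rw [← dQ_cast, dQ_scale hza]
      exact mul_pos (by exact_mod_cast hNa) (hyAipos i hi)
    have : 0 < dZ za (v i) := by exact_mod_cast h
    omega
  -- Bézout
  obtain ⟨u, hu⟩ := bezout_aux v₀ Finset.univ
  rw [hprim] at hu
  have huv : dZ u v₀ = 1 := by rw [dZ_comm]; exact hu.symm
  -- a nonzero integer vector orthogonal to v₀ (uses n ≥ 2)
  obtain ⟨g, hgne, hgv0⟩ : ∃ g : Fin n → ℤ, g ≠ 0 ∧ dZ g v₀ = 0 := by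
    set i0 : Fin n := ⟨0, by omega⟩ with hi0
    set i1 : Fin n := ⟨1, by omega⟩ with hi1
    have h01 : i0 ≠ i1 := by simp [hi0, hi1, Fin.ext_iff]
    by_cases h : v₀ i0 = 0
    · refine ⟨Pi.single i0 1, ?_, ?_⟩
      · intro hz
        have h2 := congrFun hz i0
        rw [Pi.single_eq_same] at h2
        exact one_ne_zero h2
      · rw [dZ_single, h]
    · refine ⟨fun j => v₀ i1 * (Pi.single i0 1 : Fin n → ℤ) j
        + (- v₀ i0) * (Pi.single i1 1 : Fin n → ℤ) j, ?_, ?_⟩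
      · intro hz
        have h2 := congrFun hz i1
        simp only [Pi.zero_apply, Pi.single_eq_same, Pi.single_eq_of_ne (Ne.symm h01),
          mul_zero, mul_one, zero_add] at h2
        omega
      · rw [dZ_comb, dZ_single, dZ_single]; ring
  set d : ℤ := - dZ zs v₀ with hdd
  have hd1 : 1 ≤ d := by omega
  set p : ℤ := dZ za v₀ with hpp
  have hp1 : 1 ≤ p := by omega
  -- q : an integer vector with q·v₀ = 0 and q·vᵢ ≥ 1 for nonzero vᵢ
  set q : Fin n → ℤ := fun j => p * zs j + d * za j with hq
  have hqv0 : dZ q v₀ = 0 := by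
    rw [hq, dZ_comb, ← hpp]
    have h2 : dZ zs v₀ = -d := by omega
    rw [h2]; ring
  have hqvi : ∀ i, 0 ≤ dZ q (v i) := by
    intro i
    rw [hq, dZ_comb]
    exact add_nonneg (mul_nonneg (by omega) (hzsv i)) (mul_nonneg (by omega) (hzav i))
  have hqpos : ∀ i, v i ≠ 0 → 1 ≤ dZ q (v i) := by
    intro i hi
    rw [hq, dZ_comb]
    have h1 : 0 ≤ p * dZ zs (v i) := mul_nonneg (by omega) (hzsv i)
    have h2 : 1 ≤ dZ za (v i) := hzapos i hi
    nlinarith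
  -- the nonzero "null direction" f
  set Ng : ℤ := (∑ i, |dZ g (v i)|) + 1 with hNg
  have hNg1 : 1 ≤ Ng := by
    have h0 : 0 ≤ ∑ i, |dZ g (v i)| := Finset.sum_nonneg fun i _ => abs_nonneg _
    omega
  have hNgbd : ∀ i, |dZ g (v i)| < Ng := by
    intro i
    have h0 : |dZ g (v i)| ≤ ∑ i', |dZ g (v i')| :=
      Finset.single_le_sum (f := fun i' => |dZ g (v i')|)
        (fun i' _ => abs_nonneg _) (Finset.mem_univ i)
    omega
  have hcomb : ∀ (a : ℤ) (x : Fin n → ℤ) (w : Fin n → ℤ),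
      dZ (fun j => a * q j + x j) w = a * dZ q w + dZ x w := by
    intro a x w
    have h := dZ_comb a 1 q x w
    simpa using h
  have hf : ∀ (N' : ℤ), Ng ≤ N' →
      dZ (fun j => N' * q j + g j) v₀ = 0 ∧
      (∀ i, 0 ≤ dZ (fun j => N' * q j + g j) (v i)) ∧
      (∀ i, v i ≠ 0 → 1 ≤ dZ (fun j => N' * q j + g j) (v i)) := by
    intro N' hN'
    have hN'0 : 0 ≤ N' := by omega
    have haux : ∀ i, v i ≠ 0 → 1 ≤ N' * dZ q (v i) + dZ g (v i) := by
      intro i hi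
      have h1 : N' * 1 ≤ N' * dZ q (v i) := mul_le_mul_of_nonneg_left (hqpos i hi) hN'0
      have h2 := hNgbd i
      have h3 := neg_abs_le (dZ g (v i))
      omega
    refine ⟨by rw [hcomb, hqv0, hgv0]; ring, ?_, ?_⟩
    · intro i
      by_cases hi : v i = 0
      · rw [hcomb, hi, dZ_zero_right, dZ_zero_right]; simp
      · rw [hcomb]; have := haux i hi; omega
    · intro i hi
      rw [hcomb]; exact haux i hi
  obtain ⟨f, hfne, hfv0, hfvi, hfvip⟩ :
      ∃ f : Fin n → ℤ, f ≠ 0 ∧ dZ f v₀ = 0 ∧ (∀ i, 0 ≤ dZ f (v i)) ∧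
        (∀ i, v i ≠ 0 → 1 ≤ dZ f (v i)) := by
    by_cases h1 : (fun j => Ng * q j + g j) = (0 : Fin n → ℤ)
    · obtain ⟨e1, e2, e3⟩ := hf (Ng + 1) (by omega)
      refine ⟨fun j => (Ng + 1) * q j + g j, ?_, e1, e2, e3⟩
      intro h2
      apply hgne
      funext j
      have a1 := congrFun h1 j
      have a2 := congrFun h2 j
      simp only [Pi.zero_apply] at a1 a2
      have hqj : q j = 0 := by
        have h5 : (Ng + 1) * q j + g j - (Ng * q j + g j) = q j := by ring
        rw [a1, a2] at h5
        simpa using h5.symm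
      rw [hqj, mul_zero, zero_add] at a1
      simp only [Pi.zero_apply]
      exact a1
    · obtain ⟨e1, e2, e3⟩ := hf Ng le_rfl
      exact ⟨_, h1, e1, e2, e3⟩
  -- the Demazure root e₀
  set K : ℤ := ∑ i, |dZ zs (v i) + (d - 1) * dZ u (v i)| with hK
  have hK0 : 0 ≤ K := Finset.sum_nonneg fun i _ => abs_nonneg _
  have hKbd : ∀ i, |dZ zs (v i) + (d - 1) * dZ u (v i)| ≤ K := by
    intro i
    rw [hK]
    exact Finset.single_le_sum (f := fun i' => |dZ zs (v i') + (d - 1) * dZ u (v i')|)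
      (fun i' _ => abs_nonneg _) (Finset.mem_univ i)
  set e0 : Fin n → ℤ := fun j => zs j + (d - 1) * u j + K * f j with he0
  have heval : ∀ w, dZ e0 w = dZ zs w + (d - 1) * dZ u w + K * dZ f w := by
    intro w
    simp only [he0, dZ, add_mul, mul_assoc, Finset.sum_add_distrib, Finset.mul_sum]
  have he0v0 : dZ e0 v₀ = -1 := by
    rw [heval, huv, hfv0]
    have h2 : dZ zs v₀ = -d := by omega
    rw [h2]; ring
  have he0vi : ∀ i, 0 ≤ dZ e0 (v i) := by
    intro i
    by_cases hi : v i = 0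
    · rw [heval, hi, dZ_zero_right, dZ_zero_right, dZ_zero_right]; simp
    · rw [heval]
      have h1 := hKbd i
      have h2 := hfvip i hi
      have h3 := neg_abs_le (dZ zs (v i) + (d - 1) * dZ u (v i))
      have h4 : K * 1 ≤ K * dZ f (v i) := mul_le_mul_of_nonneg_left h2 hK0
      omega
  -- the infinite family
  have hevalk : ∀ (k : ℤ) (w : Fin n → ℤ),
      dZ (fun j => e0 j + k * f j) w = dZ e0 w + k * dZ f w := by
    intro k w
    simp only [dZ, add_mul, mul_assoc, Finset.sum_add_distrib, Finset.mul_sum]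
  refine Set.infinite_of_injective_forall_mem
    (f := fun k : ℕ => toHom (fun j => e0 j + (k : ℤ) * f j)) ?_ ?_
  · intro k l hkl
    obtain ⟨j, hj⟩ := Function.ne_iff.mp hfne
    have hfj : f j ≠ 0 := by simpa using hj
    have h2 := congrArg (fun φ : (Fin n → ℤ) →+ ℤ => φ (Pi.single j 1)) hkl
    simp only [toHom_single] at h2
    have h3 : (k : ℤ) * f j = (l : ℤ) * f j := by linarith
    have h4 : (k : ℤ) = l := mul_right_cancel₀ hfj h3
    exact_mod_cast h4
  · intro k
    refine ⟨?_, ?_⟩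
    · show toHom (fun j => e0 j + (k : ℤ) * f j) v₀ = -1
      rw [toHom_apply, hevalk, he0v0, hfv0]; ring
    · intro i
      show 0 ≤ toHom (fun j => e0 j + (k : ℤ) * f j) (v i)
      rw [toHom_apply, hevalk]
      have h1 := he0vi i
      have h2 := hfvi i
      have h3 : 0 ≤ (k : ℤ) * dZ f (v i) := mul_nonneg (by exact_mod_cast Nat.zero_le k) h2
      omega
end

section
/- Let v₀, v₁, …, v_m ∈ ℤ^n (m ≥ 0, n ≥ 1). Assume the cone C ⊆ ℚ^n generated by v₀, v₁, …, v_m is pointed, i.e., C ∩ (−C) = {0}, and that v₀ does not lie in the cone generated by v₁, …, v_m. Then there exists a group homomorphism u : ℤ^n → ℤ such that u(v₀) = 0, u(v_i) ≥ 0 for all i = 1, …, m, and u(v_i) > 0 for every i ∈ {1, …, m} with v_i ∉ ℚ_{≥0}·v₀. (A supporting integral linear functional exposing the extremal ray ℚ_{≥0} v₀ of the pointed cone C.) -/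
open Finset

lemma my_farkas (n : ℕ) : ∀ (k : ℕ) (w : Fin k → (Fin n → ℚ)) (b : Fin n → ℚ),
    (∃ c : Fin k → ℚ, (∀ i, 0 ≤ c i) ∧ b = ∑ i, c i • w i) ∨
    (∃ u : (Fin n → ℚ) →ₗ[ℚ] ℚ, (∀ i, 0 ≤ u (w i)) ∧ u b < 0) := by
  intro k
  induction k with
  | zero =>
    intro w b
    by_cases hb : b = 0
    · exact Or.inl ⟨0, fun i => le_rfl, by simp [hb]⟩
    · right
      refine ⟨-(∑ j, b j • (LinearMap.proj j : (Fin n → ℚ) →ₗ[ℚ] ℚ)), fun i => i.elim0, ?_⟩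
      have : (0:ℚ) < ∑ j, b j * b j := by
        obtain ⟨j, hj⟩ : ∃ j, b j ≠ 0 := by
          by_contra h; push_neg at h; exact hb (funext h)
        exact Finset.sum_pos' (fun j _ => mul_self_nonneg _) ⟨j, Finset.mem_univ j, mul_self_pos.2 hj⟩
      simpa [LinearMap.sum_apply, smul_eq_mul] using neg_neg_of_pos this
  | succ k IH =>
    intro w b
    rcases IH (fun i => w i.castSucc) b with ⟨c, hc, hcb⟩ | ⟨u, hu, hub⟩
    · left
      refine ⟨Fin.snoc c 0, ?_, ?_⟩
      · intro i
        induction i using Fin.lastCases with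
        | last => simp
        | cast i => simpa using hc i
      · rw [Fin.sum_univ_castSucc]
        simpa using hcb
    · by_cases hlast : 0 ≤ u (w (Fin.last k))
      · right
        refine ⟨u, ?_, hub⟩
        intro i
        induction i using Fin.lastCases with
        | last => exact hlast
        | cast i => exact hu i
      · push_neg at hlast
        set wl := w (Fin.last k) with hwl
        have hL : u wl ≠ 0 := ne_of_lt hlast
        rcases IH (fun i => w i.castSucc - (u (w i.castSucc) / u wl) • wl)
            (b - (u b / u wl) • wl) with ⟨c, hc, hcb⟩ | ⟨u', hu', hub'⟩
        · left
          set S : ℚ := ∑ i, c i * (u (w i.castSucc) / u wl) with hS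
          have hSle : S ≤ 0 := by
            refine Finset.sum_nonpos fun i _ => ?_
            exact mul_nonpos_of_nonneg_of_nonpos (hc i)
              (div_nonpos_of_nonneg_of_nonpos (hu i) (le_of_lt hlast))
          have hlam : 0 ≤ u b / u wl - S := by
            have : 0 < u b / u wl := div_pos_of_neg_of_neg hub hlast
            linarith
          refine ⟨Fin.snoc c (u b / u wl - S), ?_, ?_⟩
          · intro i
            induction i using Fin.lastCases with
            | last => simpa using hlam
            | cast i => simpa using hc i
          · have hcb2 : b - (u b / u wl) • wl
                = (∑ i, c i • w i.castSucc) - S • wl := by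
              rw [hcb]
              simp only [smul_sub, smul_smul, Finset.sum_sub_distrib, ← Finset.sum_smul, hS]
            have h3 : b = (∑ i : Fin k, c i • w i.castSucc - S • wl) + (u b / u wl) • wl :=
              eq_add_of_sub_eq hcb2
            have h4 : (∑ i : Fin k, c i • w i.castSucc - S • wl) + (u b / u wl) • wl
                = ∑ i : Fin k, c i • w i.castSucc + (u b / u wl - S) • wl := by
              rw [sub_smul]; abel
            rw [Fin.sum_univ_castSucc]
            simp only [Fin.snoc_castSucc, Fin.snoc_last, ← hwl]
            exact h3.trans h4
        · right
          refine ⟨u' - (u' wl / u wl) • u, ?_, ?_⟩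
          · intro i
            induction i using Fin.lastCases with
            | last =>
              simp only [LinearMap.sub_apply, LinearMap.smul_apply, smul_eq_mul, ← hwl]
              rw [div_mul_cancel₀ _ hL]
              simp
            | cast i =>
              have h1 := hu' i
              simp only [map_sub, map_smul, smul_eq_mul] at h1
              have key : u' wl / u wl * u (w i.castSucc)
                  = u (w i.castSucc) / u wl * u' wl := by ring
              simp only [LinearMap.sub_apply, LinearMap.smul_apply, smul_eq_mul, key]
              linarith
          · have h1 := hub'
            simp only [map_sub, map_smul, smul_eq_mul] at h1
            have key : u' wl / u wl * u b = u b / u wl * u' wl := by ring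
            simp only [LinearMap.sub_apply, LinearMap.smul_apply, smul_eq_mul, key]
            linarith

lemma my_farkas' {ι : Type} [Fintype ι] (n : ℕ) (w : ι → (Fin n → ℚ)) (b : Fin n → ℚ) :
    (∃ c : ι → ℚ, (∀ i, 0 ≤ c i) ∧ b = ∑ i, c i • w i) ∨
    (∃ u : (Fin n → ℚ) →ₗ[ℚ] ℚ, (∀ i, 0 ≤ u (w i)) ∧ u b < 0) := by
  obtain e := Fintype.equivFin ι
  rcases my_farkas n (Fintype.card ι) (fun i => w (e.symm i)) b with ⟨c, hc, hcb⟩ | ⟨u, hu, hub⟩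
  · left
    refine ⟨fun i => c (e i), fun i => hc _, ?_⟩
    rw [hcb]
    exact Fintype.sum_equiv e.symm _ _ (fun x => by simp)
  · right
    exact ⟨u, fun i => by simpa using hu (e i), hub⟩

lemma exists_functional_aux (n m : ℕ) (w₀ : Fin n → ℚ) (w : Fin m → Fin n → ℚ)
    (hpointed : ∀ x : Fin n → ℚ,
      (∃ (c₀ : ℚ) (c : Fin m → ℚ), 0 ≤ c₀ ∧ (∀ i, 0 ≤ c i) ∧ x = c₀ • w₀ + ∑ i, c i • w i) →
      (∃ (c₀ : ℚ) (c : Fin m → ℚ), 0 ≤ c₀ ∧ (∀ i, 0 ≤ c i) ∧ -x = c₀ • w₀ + ∑ i, c i • w i) →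
      x = 0)
    (hextremal : ¬ ∃ c : Fin m → ℚ, (∀ i, 0 ≤ c i) ∧ w₀ = ∑ i, c i • w i)
    (i : Fin m) (hbad : ¬ ∃ q : ℚ, 0 ≤ q ∧ w i = q • w₀) :
    ∃ u : (Fin n → ℚ) →ₗ[ℚ] ℚ, u w₀ = 0 ∧ (∀ j, 0 ≤ u (w j)) ∧ 0 < u (w i) := by
  rcases my_farkas' n (Sum.elim w (fun s : Bool => if s then w₀ else -w₀)) (-(w i)) with
    ⟨c, hc, hcb⟩ | ⟨u, hu, hub⟩
  · exfalso
    rw [Fintype.sum_sum_type] at hcb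
    simp only [Sum.elim_inl, Sum.elim_inr, Fintype.sum_bool] at hcb
    rw [if_pos trivial, if_neg (by simp)] at hcb
    set t : ℚ := c (Sum.inr true) - c (Sum.inr false) with ht
    have heq : -(w i) = (∑ j, c (Sum.inl j) • w j) + t • w₀ := by
      rw [hcb, sub_smul]
      simp only [smul_neg]
      abel
    by_cases htn : 0 ≤ t
    · have h1 : ∃ (c₀ : ℚ) (c' : Fin m → ℚ), 0 ≤ c₀ ∧ (∀ j, 0 ≤ c' j) ∧
          w i = c₀ • w₀ + ∑ j, c' j • w j := by
        refine ⟨0, fun j => if j = i then 1 else 0, le_rfl,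
          fun j => by by_cases h : j = i <;> simp [h], ?_⟩
        simp [ite_smul, Finset.sum_ite_eq']
      have h2 : ∃ (c₀ : ℚ) (c' : Fin m → ℚ), 0 ≤ c₀ ∧ (∀ j, 0 ≤ c' j) ∧
          -(w i) = c₀ • w₀ + ∑ j, c' j • w j := by
        refine ⟨t, fun j => c (Sum.inl j), htn, fun j => hc _, ?_⟩
        rw [heq]; abel
      have := hpointed (w i) h1 h2
      exact hbad ⟨0, le_rfl, by rw [this, zero_smul]⟩
    · push_neg at htn
      refine hextremal ⟨fun j => ((if j = i then (1:ℚ) else 0) + c (Sum.inl j)) / (-t), ?_, ?_⟩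
      · intro j
        apply div_nonneg _ (by linarith)
        have := hc (Sum.inl j)
        split <;> linarith
      · funext jj
        have hjj := congrFun heq jj
        simp only [Pi.neg_apply, Pi.add_apply, Finset.sum_apply, Pi.smul_apply,
          smul_eq_mul] at hjj ⊢
        have split : ∑ j, ((if j = i then (1:ℚ) else 0) + c (Sum.inl j)) / (-t) * w j jj
            = ((∑ j, (if j = i then (1:ℚ) else 0) * w j jj)
              + ∑ j, c (Sum.inl j) * w j jj) / (-t) := by
          rw [← Finset.sum_add_distrib, Finset.sum_div]
          refine Finset.sum_congr rfl fun j _ => by ring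
        rw [split]
        have hsum : ∑ j, (if j = i then (1:ℚ) else 0) * w j jj = w i jj := by
          simp [ite_mul, Finset.sum_ite_eq']
        rw [hsum, eq_div_iff (by linarith : (-t) ≠ 0)]
        linarith [hjj]
  · refine ⟨u, ?_, fun j => hu (Sum.inl j), ?_⟩
    · have h1 := hu (Sum.inr true)
      have h2 := hu (Sum.inr false)
      norm_num [Sum.elim_inr] at h1 h2
      linarith
    · rw [map_neg] at hub
      linarith

/-- A supporting integral linear functional exposing the extremal ray
`ℚ_{≥0} v₀` of a pointed rational polyhedral cone generated by
`v₀, v₁, …, v_m ∈ ℤ^n`: there is a group homomorphism `u : ℤ^n → ℤ` with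
`u(v₀) = 0`, `u(v_i) ≥ 0` for all `i`, and `u(v_i) > 0` whenever
`v_i ∉ ℚ_{≥0}·v₀`. -/
theorem exists_supporting_functional
    (n m : ℕ) (hn : 1 ≤ n)
    (v₀ : Fin n → ℤ) (v : Fin m → Fin n → ℤ)
    (C : Set (Fin n → ℚ))
    (hC : C = {x : Fin n → ℚ | ∃ (c₀ : ℚ) (c : Fin m → ℚ),
      0 ≤ c₀ ∧ (∀ i, 0 ≤ c i) ∧
      x = c₀ • (fun j => ((v₀ j : ℚ))) + ∑ i, c i • fun j => ((v i j : ℚ))})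
    (hpointed : ∀ x ∈ C, -x ∈ C → x = 0)
    (hextremal : ¬ ∃ c : Fin m → ℚ, (∀ i, 0 ≤ c i) ∧
      (fun j => ((v₀ j : ℚ))) = ∑ i, c i • fun j => ((v i j : ℚ))) :
    ∃ u : (Fin n → ℤ) →+ ℤ, u v₀ = 0 ∧ (∀ i, 0 ≤ u (v i)) ∧
      ∀ i, (¬ ∃ q : ℚ, 0 ≤ q ∧
        (fun j => ((v i j : ℚ))) = q • fun j => ((v₀ j : ℚ))) →
        0 < u (v i) := by
  classical
  subst hC
  -- rational vectors
  set w₀ : Fin n → ℚ := fun j => ((v₀ j : ℚ)) with hw₀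
  set w : Fin m → Fin n → ℚ := fun i j => ((v i j : ℚ)) with hw
  -- Step 1+2: a rational functional
  have step : ∀ i : Fin m, ∃ u : (Fin n → ℚ) →ₗ[ℚ] ℚ, u w₀ = 0 ∧ (∀ j, 0 ≤ u (w j)) ∧
      ((¬ ∃ q : ℚ, 0 ≤ q ∧ w i = q • w₀) → 0 < u (w i)) := by
    intro i
    by_cases h : ∃ q : ℚ, 0 ≤ q ∧ w i = q • w₀
    · exact ⟨0, by simp, fun j => le_rfl, fun hc => absurd h hc⟩
    · obtain ⟨u, h1, h2, h3⟩ := exists_functional_aux n m w₀ w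
        (fun x hx hnx => hpointed x hx hnx) hextremal i h
      exact ⟨u, h1, h2, fun _ => h3⟩
  choose U hU1 hU2 hU3 using step
  set uQ : (Fin n → ℚ) →ₗ[ℚ] ℚ := ∑ i, U i with huQ
  have huQ0 : uQ w₀ = 0 := by
    rw [huQ, LinearMap.sum_apply]
    exact Finset.sum_eq_zero fun i _ => hU1 i
  have huQnn : ∀ i, 0 ≤ uQ (w i) := by
    intro i
    rw [huQ, LinearMap.sum_apply]
    exact Finset.sum_nonneg fun k _ => hU2 k i
  have huQpos : ∀ i, (¬ ∃ q : ℚ, 0 ≤ q ∧ w i = q • w₀) → 0 < uQ (w i) := by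
    intro i hbad
    rw [huQ, LinearMap.sum_apply]
    exact Finset.sum_pos' (fun k _ => hU2 k i) ⟨i, Finset.mem_univ i, hU3 i hbad⟩
  -- Step 3: clear denominators
  set q : Fin n → ℚ := fun j => uQ (fun jj => if j = jj then 1 else 0) with hq
  have expand : ∀ x : Fin n → ℚ, uQ x = ∑ j, x j * q j := by
    intro x
    rw [LinearMap.pi_apply_eq_sum_univ uQ x]
    simp [hq, smul_eq_mul]
  set N : ℤ := ∏ j, ((q j).den : ℤ) with hN
  have hNpos : 0 < N := Finset.prod_pos fun j _ => by exact_mod_cast (q j).pos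
  have hdvd : ∀ j : Fin n, ∃ kk : ℤ, N = ((q j).den : ℤ) * kk := by
    intro j
    exact (Finset.dvd_prod_of_mem (fun j => ((q j).den : ℤ)) (Finset.mem_univ j))
  choose kk hkk using hdvd
  set a : Fin n → ℤ := fun j => kk j * (q j).num with ha
  have hacast : ∀ j, ((a j : ℤ) : ℚ) = (N : ℚ) * q j := by
    intro j
    have hden : ((q j).den : ℚ) ≠ 0 := by exact_mod_cast (q j).den_nz
    have hnum : ((q j).num : ℚ) = q j * (q j).den :=
      (div_eq_iff hden).1 (Rat.num_div_den (q j))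
    have : ((N : ℤ) : ℚ) = ((q j).den : ℚ) * (kk j : ℚ) := by
      rw [hkk j]; push_cast; ring
    rw [ha]
    push_cast
    rw [hnum, this]
    ring
  have bridge : ∀ wz : Fin n → ℤ,
      ((∑ j, a j * wz j : ℤ) : ℚ) = (N : ℚ) * uQ (fun j => ((wz j : ℚ))) := by
    intro wz
    rw [expand]
    push_cast
    rw [Finset.mul_sum]
    refine Finset.sum_congr rfl fun j _ => ?_
    rw [hacast j]
    ring
  refine ⟨AddMonoidHom.mk' (fun x => ∑ j, a j * x j)
    (fun x y => by simp [mul_add, Finset.sum_add_distrib]), ?_, ?_, ?_⟩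
  · show (∑ j, a j * v₀ j) = 0
    have h := bridge v₀
    rw [← hw₀, huQ0, mul_zero] at h
    exact_mod_cast h
  · intro i
    show (0:ℤ) ≤ ∑ j, a j * v i j
    have h := bridge (v i)
    have h2 : (0:ℚ) ≤ (N : ℚ) * uQ (fun j => ((v i j : ℚ))) :=
      mul_nonneg (by exact_mod_cast hNpos.le) (huQnn i)
    rw [← h] at h2
    exact_mod_cast h2
  · intro i hbad
    show (0:ℤ) < ∑ j, a j * v i j
    have h := bridge (v i)
    have h2 : (0:ℚ) < (N : ℚ) * uQ (fun j => ((v i j : ℚ))) :=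
      mul_pos (by exact_mod_cast hNpos) (huQpos i hbad)
    rw [← h] at h2
    exact_mod_cast h2
end

section
/- Consider the action of the two-dimensional torus (ℂˣ)² on ℂ⁷ given by (t₁,t₂) · (z₁,…,z₇) = (t₁z₁, t₁z₂, t₁⁻¹z₃, t₂z₄, t₂z₅, t₁⁻¹t₂⁻¹z₆, t₁⁻¹t₂⁻¹z₇). Let z ∈ ℂ⁷ satisfy z₄ = z₅ = z₆ = z₇ = 0, z₃ ≠ 0, and (z₁, z₂) ≠ (0,0). Then the orbit {(t₁,t₂) · z : t₁, t₂ ∈ ℂˣ} is a closed subset of ℂ⁷ (with its standard topology), and the stabilizer of z equals {(1, t₂) : t₂ ∈ ℂˣ}. (This identifies the closed orbits and stabilizers over the intermediate Luna stratum Z ∖ {0} in the paper's example of a five-dimensional affine toric variety with three Luna strata.) -/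
/-- The action of the torus `(ℂˣ)²` on `ℂ⁷` given by
`(t₁,t₂) · (z₁,…,z₇) = (t₁z₁, t₁z₂, t₁⁻¹z₃, t₂z₄, t₂z₅, t₁⁻¹t₂⁻¹z₆, t₁⁻¹t₂⁻¹z₇)`. -/
def torusAct (t₁ t₂ : ℂˣ) (z : Fin 7 → ℂ) : Fin 7 → ℂ :=
  ![(t₁ : ℂ) * z 0, (t₁ : ℂ) * z 1, ((t₁⁻¹ : ℂˣ) : ℂ) * z 2,
    (t₂ : ℂ) * z 3, (t₂ : ℂ) * z 4,
    ((t₁⁻¹ * t₂⁻¹ : ℂˣ) : ℂ) * z 5, ((t₁⁻¹ * t₂⁻¹ : ℂˣ) : ℂ) * z 6]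

/-- For `z ∈ ℂ⁷` with `z₄ = z₅ = z₆ = z₇ = 0`, `z₃ ≠ 0` and `(z₁,z₂) ≠ (0,0)`,
the orbit of `z` under the `(ℂˣ)²`-action is closed in `ℂ⁷` and the stabilizer
of `z` equals `{(1, t₂) : t₂ ∈ ℂˣ}`. -/
theorem orbit_closed_and_stabilizer_of_intermediate_stratum
    (z : Fin 7 → ℂ)
    (h4 : z 3 = 0) (h5 : z 4 = 0) (h6 : z 5 = 0) (h7 : z 6 = 0)
    (h3 : z 2 ≠ 0) (h12 : ¬ (z 0 = 0 ∧ z 1 = 0)) :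
    IsClosed {w : Fin 7 → ℂ | ∃ t₁ t₂ : ℂˣ, w = torusAct t₁ t₂ z} ∧
    {p : ℂˣ × ℂˣ | torusAct p.1 p.2 z = z} = {p : ℂˣ × ℂˣ | p.1 = 1} := by
  constructor
  · have hset : {w : Fin 7 → ℂ | ∃ t₁ t₂ : ℂˣ, w = torusAct t₁ t₂ z} =
        {w : Fin 7 → ℂ | w 0 * w 2 = z 0 * z 2 ∧ w 1 * w 2 = z 1 * z 2 ∧
          w 3 = 0 ∧ w 4 = 0 ∧ w 5 = 0 ∧ w 6 = 0} := by
      ext w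
      constructor
      · rintro ⟨t₁, t₂, rfl⟩
        have ht : (t₁ : ℂ) ≠ 0 := t₁.ne_zero
        refine ⟨?_, ?_, ?_, ?_, ?_, ?_⟩
        · show (t₁ : ℂ) * z 0 * (((t₁⁻¹ : ℂˣ) : ℂ) * z 2) = z 0 * z 2
          rw [Units.val_inv_eq_inv_val]; field_simp
        · show (t₁ : ℂ) * z 1 * (((t₁⁻¹ : ℂˣ) : ℂ) * z 2) = z 1 * z 2
          rw [Units.val_inv_eq_inv_val]; field_simp
        · show (t₂ : ℂ) * z 3 = 0; rw [h4, mul_zero]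
        · show (t₂ : ℂ) * z 4 = 0; rw [h5, mul_zero]
        · show ((t₁⁻¹ * t₂⁻¹ : ℂˣ) : ℂ) * z 5 = 0; rw [h6, mul_zero]
        · show ((t₁⁻¹ * t₂⁻¹ : ℂˣ) : ℂ) * z 6 = 0; rw [h7, mul_zero]
      · rintro ⟨hw02, hw12, hw3, hw4, hw5, hw6⟩
        have hw2 : w 2 ≠ 0 := by
          rcases not_and_or.mp h12 with hz0 | hz1
          · intro h; apply hz0
            have : z 0 * z 2 = 0 := by rw [← hw02, h, mul_zero]
            exact (mul_eq_zero.mp this).resolve_right h3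
          · intro h; apply hz1
            have : z 1 * z 2 = 0 := by rw [← hw12, h, mul_zero]
            exact (mul_eq_zero.mp this).resolve_right h3
        refine ⟨Units.mk0 (z 2 / w 2) (div_ne_zero h3 hw2), 1, ?_⟩
        funext i
        fin_cases i
        · show w 0 = z 2 / w 2 * z 0
          field_simp
          linear_combination hw02
        · show w 1 = z 2 / w 2 * z 1
          field_simp
          linear_combination hw12
        · show w 2 = ((Units.mk0 (z 2 / w 2) (div_ne_zero h3 hw2))⁻¹ : ℂˣ) * z 2
          rw [Units.val_inv_eq_inv_val, Units.val_mk0, inv_div]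
          field_simp
        · show w 3 = _ * z 3; rw [h4, mul_zero, hw3]
        · show w 4 = _ * z 4; rw [h5, mul_zero, hw4]
        · show w 5 = _ * z 5; rw [h6, mul_zero, hw5]
        · show w 6 = _ * z 6; rw [h7, mul_zero, hw6]
    rw [hset]
    simp only [Set.setOf_and]
    exact (isClosed_eq ((continuous_apply 0).mul (continuous_apply 2)) continuous_const).inter
      ((isClosed_eq ((continuous_apply 1).mul (continuous_apply 2)) continuous_const).inter
      ((isClosed_eq (continuous_apply 3) continuous_const).inter
      ((isClosed_eq (continuous_apply 4) continuous_const).inter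
      ((isClosed_eq (continuous_apply 5) continuous_const).inter
        (isClosed_eq (continuous_apply 6) continuous_const)))))
  · ext p
    simp only [Set.mem_setOf_eq]
    constructor
    · intro h
      have h2 := congrFun h 2
      simp only [torusAct, Matrix.cons_val_two, Matrix.tail_cons, Matrix.head_cons,
        Units.val_inv_eq_inv_val] at h2
      have hval : ((p.1 : ℂ))⁻¹ = 1 := by
        have := mul_right_cancel₀ h3 (h2.trans (one_mul (z 2)).symm)
        exact this
      have : (p.1 : ℂ) = 1 := by
        rw [← inv_inv (p.1 : ℂ), hval, inv_one]
      exact Units.ext this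
    · intro h
      rw [h]
      funext i
      fin_cases i
      · show (1 : ℂˣ) * z 0 = z 0; rw [Units.val_one, one_mul]
      · show (1 : ℂˣ) * z 1 = z 1; rw [Units.val_one, one_mul]
      · show ((1 : ℂˣ)⁻¹ : ℂˣ) * z 2 = z 2; rw [inv_one, Units.val_one, one_mul]
      · show _ * z 3 = z 3; rw [h4, mul_zero]
      · show _ * z 4 = z 4; rw [h5, mul_zero]
      · show _ * z 5 = z 5; rw [h6, mul_zero]
      · show _ * z 6 = z 6; rw [h7, mul_zero]
end
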